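/- arXiv:2303.17266 — 6 statements merged into one kernel-verified Lean document; each statement's English description precedes it below -/
import Mathlib

section
/- Let d be even and F₁,…,F_d symmetric with zero means. Then the infimum of E(X₁⋯X_d) over couplings with X_i ~ F_i equals −E(∏_{i=1}^d G_i⁻¹(U)), attained by X_i = F_i⁻¹(U) for i = 1,…,d−1 and X_d = F_d⁻¹(1−U), with U ~ Uniform[0,1]. -/
open MeasureTheory Set
open scoped ENNReal

/-- Generalized inverse (quantile function). -/
noncomputable def quantile (ν : Measure ℝ) (u : ℝ) : ℝ :=
  sInf {x : ℝ | u ≤ (ν (Iic x)).toReal}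

namespace QAux

open Filter

lemma cdf_mono (ν : Measure ℝ) [IsProbabilityMeasure ν] :
    Monotone (fun t => (ν (Iic t)).toReal) := fun a b hab =>
  ENNReal.toReal_mono (measure_ne_top _ _) (measure_mono (Iic_subset_Iic.2 hab))

lemma cdf_nonneg (ν : Measure ℝ) (t : ℝ) : 0 ≤ (ν (Iic t)).toReal := ENNReal.toReal_nonneg

lemma cdf_le_one (ν : Measure ℝ) [IsProbabilityMeasure ν] (t : ℝ) :
    (ν (Iic t)).toReal ≤ 1 := by
  have := prob_le_one (μ := ν) (s := Iic t)
  simpa using ENNReal.toReal_mono (by norm_num) this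

lemma cdf_tendsto_atTop (ν : Measure ℝ) [IsProbabilityMeasure ν] :
    Tendsto (fun t => (ν (Iic t)).toReal) atTop (nhds 1) := by
  have h := tendsto_measure_Iic_atTop (α := ℝ) ν
  rw [measure_univ] at h
  have h2 := (ENNReal.tendsto_toReal (by norm_num : (1:ℝ≥0∞) ≠ ⊤)).comp h
  exact h2

lemma cdf_tendsto_atBot (ν : Measure ℝ) [IsProbabilityMeasure ν] :
    Tendsto (fun t => (ν (Iic t)).toReal) atBot (nhds 0) := by
  have h : Tendsto (fun t : ℝ => ν (Iic t)) atBot (nhds (ν (⋂ n : ℝ, Iic n))) := by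
    have := tendsto_measure_iInter_atBot (μ := ν) (s := fun t : ℝ => Iic t)
      (fun t => measurableSet_Iic.nullMeasurableSet)
      (fun a b hab => Iic_subset_Iic.2 hab) ⟨0, measure_ne_top _ _⟩
    exact this
  have hempty : (⋂ n : ℝ, Iic n) = (∅ : Set ℝ) := by
    ext x
    simp only [mem_iInter, mem_Iic, mem_empty_iff_false, iff_false, not_forall]
    exact ⟨x - 1, by push_neg; linarith⟩
  rw [hempty, measure_empty] at h
  have h2 := (ENNReal.tendsto_toReal (by norm_num : (0:ℝ≥0∞) ≠ ⊤)).comp h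
  exact h2

lemma exists_cdf_lt (ν : Measure ℝ) [IsProbabilityMeasure ν] {u : ℝ} (hu : 0 < u) :
    ∃ M : ℝ, (ν (Iic M)).toReal < u :=
  ((cdf_tendsto_atBot ν).eventually_lt_const hu).exists

lemma exists_lt_cdf (ν : Measure ℝ) [IsProbabilityMeasure ν] {u : ℝ} (hu : u < 1) :
    ∃ M : ℝ, u < (ν (Iic M)).toReal :=
  ((cdf_tendsto_atTop ν).eventually_const_lt hu).exists

lemma quantile_set_nonempty (ν : Measure ℝ) [IsProbabilityMeasure ν] {u : ℝ} (hu : u < 1) :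
    {x : ℝ | u ≤ (ν (Iic x)).toReal}.Nonempty := by
  obtain ⟨M, hM⟩ := exists_lt_cdf ν hu
  exact ⟨M, hM.le⟩

lemma quantile_set_bddBelow (ν : Measure ℝ) [IsProbabilityMeasure ν] {u : ℝ} (hu : 0 < u) :
    BddBelow {x : ℝ | u ≤ (ν (Iic x)).toReal} := by
  obtain ⟨M, hM⟩ := exists_cdf_lt ν hu
  refine ⟨M, fun x hx => ?_⟩
  by_contra h
  push_neg at h
  exact absurd (hx.trans (cdf_mono ν h.le)) (not_le.2 hM)

lemma le_cdf_quantile (ν : Measure ℝ) [IsProbabilityMeasure ν] {u : ℝ}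
    (hu0 : 0 < u) (hu1 : u < 1) : u ≤ (ν (Iic (quantile ν u))).toReal := by
  set S := {x : ℝ | u ≤ (ν (Iic x)).toReal} with hS
  have hne := quantile_set_nonempty ν hu1
  have hbdd := quantile_set_bddBelow ν hu0
  -- for every ε > 0, cdf (sInf S + ε) ≥ u
  have key : ∀ ε : ℝ, 0 < ε → u ≤ (ν (Iic (sInf S + ε))).toReal := by
    intro ε hε
    obtain ⟨x, hxS, hxlt⟩ := Real.lt_sInf_add_pos hne hε
    exact hxS.trans (cdf_mono ν hxlt.le)
  have hIic : Iic (sInf S) = ⋂ n : ℕ, Iic (sInf S + 1 / (n + 1)) := by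
    ext x
    simp only [mem_Iic, mem_iInter]
    constructor
    · intro hx n
      have : (0:ℝ) < 1 / (n + 1) := by positivity
      linarith
    · intro hx
      by_contra h
      push_neg at h
      obtain ⟨n, hn⟩ := exists_nat_one_div_lt (show (0:ℝ) < x - sInf S by linarith)
      have := hx n
      linarith
  have hanti : Antitone fun n : ℕ => Iic (sInf S + 1 / (n + 1)) := by
    intro a b hab
    apply Iic_subset_Iic.2
    have : (1:ℝ) / (b + 1) ≤ 1 / (a + 1) := by
      apply one_div_le_one_div_of_le (by positivity)
      exact_mod_cast by omega
    linarith
  have htend := tendsto_measure_iInter_atTop (μ := ν)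
    (fun n : ℕ => measurableSet_Iic.nullMeasurableSet) hanti ⟨0, measure_ne_top _ _⟩
  rw [← hIic] at htend
  have htendR := (ENNReal.tendsto_toReal (measure_ne_top ν _)).comp htend
  exact ge_of_tendsto' htendR fun n => key _ (by positivity)

lemma quantile_le_iff (ν : Measure ℝ) [IsProbabilityMeasure ν] {u t : ℝ}
    (hu0 : 0 < u) (hu1 : u < 1) :
    quantile ν u ≤ t ↔ u ≤ (ν (Iic t)).toReal := by
  constructor
  · intro h
    exact (le_cdf_quantile ν hu0 hu1).trans (cdf_mono ν h)
  · intro h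
    exact csInf_le (quantile_set_bddBelow ν hu0) h

lemma lt_quantile_iff (ν : Measure ℝ) [IsProbabilityMeasure ν] {u t : ℝ}
    (hu0 : 0 < u) (hu1 : u < 1) :
    t < quantile ν u ↔ (ν (Iic t)).toReal < u := by
  rw [← not_le, ← not_le, quantile_le_iff ν hu0 hu1]

lemma quantile_mono_Ioo (ν : Measure ℝ) [IsProbabilityMeasure ν] {u v : ℝ}
    (hu0 : 0 < u) (huv : u ≤ v) (hv1 : v < 1) : quantile ν u ≤ quantile ν v := by
  apply csInf_le_csInf (quantile_set_bddBelow ν hu0) (quantile_set_nonempty ν hv1)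
  intro x hx
  exact huv.trans hx

lemma quantile_of_nonpos (ν : Measure ℝ) {u : ℝ} (hu : u ≤ 0) : quantile ν u = 0 := by
  have : {x : ℝ | u ≤ (ν (Iic x)).toReal} = univ := by
    ext x; simp only [mem_setOf_eq, mem_univ, iff_true]
    exact hu.trans ENNReal.toReal_nonneg
  rw [quantile, this]
  apply Real.sInf_of_not_bddBelow
  rintro ⟨b, hb⟩
  have := hb (mem_univ (b - 1))
  linarith

lemma quantile_of_one_lt (ν : Measure ℝ) [IsProbabilityMeasure ν] {u : ℝ} (hu : 1 < u) :
    quantile ν u = 0 := by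
  have : {x : ℝ | u ≤ (ν (Iic x)).toReal} = ∅ := by
    ext x; simp only [mem_setOf_eq, mem_empty_iff_false, iff_false, not_le]
    exact (cdf_le_one ν x).trans_lt hu
  rw [quantile, this, Real.sInf_empty]

lemma measurable_quantile (ν : Measure ℝ) [IsProbabilityMeasure ν] :
    Measurable (quantile ν) := by
  apply measurable_of_Iic
  intro t
  have hdesc : quantile ν ⁻¹' Iic t =
      (Ioo (0:ℝ) 1 ∩ Iic ((ν (Iic t)).toReal)) ∪
      ((if (0:ℝ) ≤ t then (Iic (0:ℝ) ∪ Ioi 1) else ∅) ∪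
        (if quantile ν 1 ≤ t then {(1:ℝ)} else ∅)) := by
    ext u
    simp only [mem_preimage, mem_Iic, mem_union, mem_inter_iff, mem_Ioo]
    rcases le_or_gt u 0 with hu | hu
    · rw [quantile_of_nonpos ν hu]
      constructor
      · intro h
        refine Or.inr (Or.inl ?_)
        rw [if_pos h]
        exact Or.inl hu
      · rintro (⟨⟨h1, _⟩, _⟩ | (h | h))
        · linarith
        · split_ifs at h with h0
          · exact h0
          · exact absurd h (by simp)
        · split_ifs at h with h0
          · simp only [mem_singleton_iff] at h; linarith
          · exact absurd h (by simp)
    · rcases lt_trichotomy u 1 with hu1 | hu1 | hu1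
      · rw [quantile_le_iff ν hu hu1]
        constructor
        · intro h; exact Or.inl ⟨⟨hu, hu1⟩, h⟩
        · rintro (⟨_, h⟩ | (h | h))
          · exact h
          · split_ifs at h with h0
            · rcases h with h | h
              · simp only [mem_Iic] at h; linarith
              · simp only [mem_Ioi] at h; linarith
            · exact absurd h (by simp)
          · split_ifs at h with h0
            · simp only [mem_singleton_iff] at h; linarith
            · exact absurd h (by simp)
      · subst hu1
        constructor
        · intro h
          refine Or.inr (Or.inr ?_)
          rw [if_pos h]; exact rfl
        · rintro (⟨⟨_, h1⟩, _⟩ | (h | h))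
          · linarith
          · split_ifs at h with h0
            · rcases h with h | h
              · simp only [mem_Iic] at h; linarith
              · simp only [mem_Ioi] at h; linarith
            · exact absurd h (by simp)
          · split_ifs at h with h0
            · exact h0
            · exact absurd h (by simp)
      · rw [quantile_of_one_lt ν hu1]
        constructor
        · intro h
          refine Or.inr (Or.inl ?_)
          rw [if_pos h]
          exact Or.inr hu1
        · rintro (⟨⟨_, h1⟩, _⟩ | (h | h))
          · linarith
          · split_ifs at h with h0
            · exact h0
            · exact absurd h (by simp)
          · split_ifs at h with h0
            · simp only [mem_singleton_iff] at h; linarith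
            · exact absurd h (by simp)
  rw [hdesc]
  apply MeasurableSet.union
  · exact measurableSet_Ioo.inter measurableSet_Iic
  · apply MeasurableSet.union
    · split_ifs
      · exact measurableSet_Iic.union measurableSet_Ioi
      · exact MeasurableSet.empty
    · split_ifs
      · exact measurableSet_singleton _
      · exact MeasurableSet.empty


section Symmetry

variable {ν : Measure ℝ} [IsProbabilityMeasure ν]

lemma map_neg_apply (hsym : ν.map (fun x => -x) = ν) {s : Set ℝ} (hs : MeasurableSet s) :
    ν ((fun x : ℝ => -x) ⁻¹' s) = ν s := by
  conv_rhs => rw [← hsym]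
  rw [Measure.map_apply measurable_neg hs]

lemma meas_Iic_eq_Ici (hsym : ν.map (fun x => -x) = ν) (x : ℝ) :
    ν (Iic x) = ν (Ici (-x)) := by
  have : (fun y : ℝ => -y) ⁻¹' Ici (-x) = Iic x := by
    ext y; simp only [mem_preimage, mem_Ici, mem_Iic, neg_le_neg_iff]
  rw [← this, map_neg_apply hsym measurableSet_Ici]

lemma meas_Iio_add_Ici (x : ℝ) :
    (ν (Iio x)).toReal + (ν (Ici x)).toReal = 1 := by
  have h := measure_add_measure_compl (μ := ν) (measurableSet_Iio (a := x))
  rw [compl_Iio] at h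
  have := congrArg ENNReal.toReal h
  rwa [ENNReal.toReal_add (measure_ne_top _ _) (measure_ne_top _ _), measure_univ,
    ENNReal.toReal_one] at this

lemma cdf_eq_one_sub_Iio (hsym : ν.map (fun x => -x) = ν) (x : ℝ) :
    (ν (Iic x)).toReal = 1 - (ν (Iio (-x))).toReal := by
  rw [meas_Iic_eq_Ici hsym]
  have := meas_Iio_add_Ici (ν := ν) (-x)
  linarith

lemma cdf_abs_of_neg {t : ℝ} (ht : t < 0) : ((ν.map (fun x => |x|)) (Iic t)).toReal = 0 := by
  rw [Measure.map_apply measurable_abs measurableSet_Iic]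
  have : (fun x : ℝ => |x|) ⁻¹' Iic t = ∅ := by
    ext y; simp only [mem_preimage, mem_Iic, mem_empty_iff_false, iff_false, not_le]
    exact ht.trans_le (abs_nonneg y)
  rw [this, measure_empty, ENNReal.toReal_zero]

lemma cdf_half_of_neg (hsym : ν.map (fun x => -x) = ν) {t : ℝ} (ht : t < 0) :
    (ν (Iic t)).toReal ≤ 1 / 2 := by
  have hsub : Iic t ⊆ Iio (-t) := fun y hy => by
    simp only [mem_Iic] at hy; simp only [mem_Iio]; linarith
  have h1 : (ν (Iic t)).toReal ≤ (ν (Iio (-t))).toReal :=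
    ENNReal.toReal_mono (measure_ne_top _ _) (measure_mono hsub)
  have h2 := cdf_eq_one_sub_Iio hsym t
  linarith

lemma cdf_abs_of_nonneg (hsym : ν.map (fun x => -x) = ν) {t : ℝ} (ht : 0 ≤ t) :
    ((ν.map (fun x => |x|)) (Iic t)).toReal = 2 * (ν (Iic t)).toReal - 1 := by
  rw [Measure.map_apply measurable_abs measurableSet_Iic]
  have habs : (fun x : ℝ => |x|) ⁻¹' Iic t = Icc (-t) t := by
    ext y; simp only [mem_preimage, mem_Iic, mem_Icc, abs_le]
  rw [habs]
  have hunion : Iio (-t) ∪ Icc (-t) t = Iic t := by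
    ext y
    simp only [mem_union, mem_Iio, mem_Icc, mem_Iic]
    constructor
    · rintro (h | ⟨_, h⟩)
      · linarith
      · exact h
    · intro h
      rcases lt_or_ge y (-t) with h' | h'
      · exact Or.inl h'
      · exact Or.inr ⟨h', h⟩
  have hdisj : Disjoint (Iio (-t)) (Icc (-t) t) := by
    apply Set.disjoint_left.2
    intro y hy hy'
    simp only [mem_Iio] at hy
    exact absurd hy'.1 (not_le.2 hy)
  have hadd : ν (Iio (-t)) + ν (Icc (-t) t) = ν (Iic t) := by
    rw [← measure_union hdisj (measurableSet_Icc), hunion]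
  have hadd' := congrArg ENNReal.toReal hadd
  rw [ENNReal.toReal_add (measure_ne_top _ _) (measure_ne_top _ _)] at hadd'
  have hIio : (ν (Iio (-t))).toReal = 1 - (ν (Iic t)).toReal := by
    have := cdf_eq_one_sub_Iio hsym t
    rw [show -t = -t from rfl] at this
    linarith
  linarith

lemma quantile_abs (hsym : ν.map (fun x => -x) = ν) {v : ℝ} (hv0 : 0 < v) (hv1 : v < 1) :
    quantile (ν.map (fun x => |x|)) v = quantile ν ((1 + v) / 2) := by
  have hset : {x : ℝ | v ≤ ((ν.map (fun x => |x|)) (Iic x)).toReal} =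
      {x : ℝ | (1 + v) / 2 ≤ (ν (Iic x)).toReal} := by
    ext x
    simp only [mem_setOf_eq]
    rcases lt_or_ge x 0 with hx | hx
    · rw [cdf_abs_of_neg hx]
      constructor
      · intro h; linarith
      · intro h
        have := cdf_half_of_neg hsym hx
        linarith
    · rw [cdf_abs_of_nonneg hsym hx]
      constructor
      · intro h; linarith
      · intro h; linarith
  rw [quantile, quantile, hset]

lemma quantile_nonneg_of_null_Iio {μ' : Measure ℝ} (hnull : μ' (Iio 0) = 0) {u : ℝ}
    (hu : 0 < u) : 0 ≤ quantile μ' u := by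
  apply Real.sInf_nonneg
  intro x hx
  by_contra h
  push_neg at h
  have hsub : Iic x ⊆ Iio 0 := fun y hy => by
    simp only [mem_Iic] at hy; simp only [mem_Iio]; linarith
  have : μ' (Iic x) = 0 := le_antisymm (hnull ▸ measure_mono hsub) zero_le
  simp only [mem_setOf_eq, this, ENNReal.toReal_zero] at hx
  linarith

lemma abs_map_null_Iio : (ν.map (fun x => |x|)) (Iio 0) = 0 := by
  rw [Measure.map_apply measurable_abs measurableSet_Iio]
  have : (fun x : ℝ => |x|) ⁻¹' Iio 0 = ∅ := by
    ext y; simp only [mem_preimage, mem_Iio, mem_empty_iff_false, iff_false, not_lt]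
    exact abs_nonneg y
  rw [this, measure_empty]

lemma quantile_reflect (hsym : ν.map (fun x => -x) = ν) (u : ℝ) :
    quantile ν (1 - u) = -sSup {y : ℝ | (ν (Iio y)).toReal ≤ u} := by
  have hset : {x : ℝ | 1 - u ≤ (ν (Iic x)).toReal}
      = -{y : ℝ | (ν (Iio y)).toReal ≤ u} := by
    ext x
    simp only [mem_setOf_eq, Set.mem_neg]
    rw [cdf_eq_one_sub_Iio hsym x]
    constructor
    · intro h; linarith
    · intro h; linarith
  rw [quantile, hset, Real.sInf_def, neg_neg]

lemma quantile_reflect_ae (hsym : ν.map (fun x => -x) = ν) :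
    ∀ᵐ u ∂(volume.restrict (Ioo (0:ℝ) 1)), quantile ν (1 - u) = -quantile ν u := by
  set Qp : ℝ → ℝ := fun u => sSup {y : ℝ | (ν (Iio y)).toReal ≤ u} with hQp
  have hIioIic : ∀ y : ℝ, (ν (Iio y)).toReal ≤ (ν (Iic y)).toReal := fun y =>
    ENNReal.toReal_mono (measure_ne_top _ _) (measure_mono Iio_subset_Iic_self)
  have h1 : ∀ u : ℝ, 0 < u → u < 1 → quantile ν u ≤ Qp u := by
    intro u hu0 hu1
    have hbdd : BddAbove {y : ℝ | (ν (Iio y)).toReal ≤ u} := by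
      obtain ⟨M, hM⟩ := exists_lt_cdf ν hu1
      refine ⟨M + 1, fun y hy => ?_⟩
      by_contra h
      push_neg at h
      have : (ν (Iic M)).toReal ≤ (ν (Iio y)).toReal :=
        ENNReal.toReal_mono (measure_ne_top _ _)
          (measure_mono (fun z hz => by
            simp only [mem_Iic] at hz; simp only [mem_Iio]; linarith))
      simp only [mem_setOf_eq] at hy
      linarith
    apply le_of_forall_pos_le_add
    intro ε hε
    have hmem : quantile ν u - ε ∈ {y : ℝ | (ν (Iio y)).toReal ≤ u} := by
      have : (ν (Iic (quantile ν u - ε))).toReal < u := by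
        rw [← lt_quantile_iff ν hu0 hu1]
        linarith
      exact le_of_lt ((hIioIic _).trans_lt this)
    have := le_csSup hbdd hmem
    linarith
  have h2 : ∀ u v : ℝ, 0 < u → u < v → v < 1 → Qp u ≤ quantile ν v := by
    intro u v hu0 huv hv1
    have hne : {y : ℝ | (ν (Iio y)).toReal ≤ u}.Nonempty := by
      obtain ⟨M, hM⟩ := exists_cdf_lt ν hu0
      exact ⟨M, le_of_lt ((hIioIic M).trans_lt hM)⟩
    apply csSup_le hne
    intro y hy
    by_contra h
    push_neg at h
    have hv : v ≤ (ν (Iic (quantile ν v))).toReal :=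
      le_cdf_quantile ν (hu0.trans huv) hv1
    have : (ν (Iic (quantile ν v))).toReal ≤ (ν (Iio y)).toReal :=
      ENNReal.toReal_mono (measure_ne_top _ _)
        (measure_mono (fun z hz => by
          simp only [mem_Iic] at hz; simp only [mem_Iio]; linarith))
    simp only [mem_setOf_eq] at hy
    linarith
  set B : Set ℝ := {u | u ∈ Ioo (0:ℝ) 1 ∧ quantile ν u < Qp u} with hB
  have hBc : B.Countable := by
    have hsub : B ⊆ ⋃ q : ℚ, {u | u ∈ Ioo (0:ℝ) 1 ∧ quantile ν u < q ∧ (q:ℝ) < Qp u} := by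
      intro u hu
      obtain ⟨q, hq1, hq2⟩ := exists_rat_btwn hu.2
      exact mem_iUnion.2 ⟨q, hu.1, hq1, hq2⟩
    apply Set.Countable.mono hsub
    apply Set.countable_iUnion
    intro q
    apply Set.Subsingleton.countable
    intro a ha b hb
    by_contra hab
    rcases lt_or_gt_of_ne hab with h | h
    · have := h2 a b ha.1.1 h hb.1.2
      have := ha.2.2
      have := hb.2.1
      linarith
    · have := h2 b a hb.1.1 h ha.1.2
      have := hb.2.2
      have := ha.2.1
      linarith
  have hBnull : volume B = 0 := hBc.measure_zero _
  have hae : ∀ᵐ u ∂(volume.restrict (Ioo (0:ℝ) 1)), u ∉ B :=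
    ae_restrict_of_ae (measure_eq_zero_iff_ae_notMem.mp hBnull)
  filter_upwards [hae, ae_restrict_mem measurableSet_Ioo] with u hu hmem
  have heq : Qp u = quantile ν u := by
    by_contra h
    exact hu ⟨hmem, lt_of_le_of_ne (h1 u hmem.1 hmem.2) (Ne.symm h)⟩
  rw [quantile_reflect hsym, show sSup {y | (ν (Iio y)).toReal ≤ u} = Qp u from rfl, heq]

end Symmetry

section Layer

open scoped ENNReal

lemma prodlayer {d : ℕ} {Ω : Type*} [MeasurableSpace Ω] (μ : Measure Ω) [SFinite μ]
    (Z : Fin d → Ω → ℝ) (hZ : ∀ i, Measurable (Z i)) :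
    ∫⁻ ω, ∏ i, ENNReal.ofReal (Z i ω) ∂μ
      = ∫⁻ t : Fin d → ℝ, μ {ω | ∀ i, t i ∈ Ioo 0 (Z i ω)} := by
  set E : Set (Ω × (Fin d → ℝ)) := {p | ∀ i, p.2 i ∈ Ioo 0 (Z i p.1)} with hE
  have hEm : MeasurableSet E := by
    have hdesc : E = ⋂ i, ({p : Ω × (Fin d → ℝ) | 0 < p.2 i} ∩ {p | p.2 i < Z i p.1}) := by
      ext p
      simp only [hE, mem_setOf_eq, mem_iInter, mem_inter_iff, mem_Ioo]
    rw [hdesc]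
    refine MeasurableSet.iInter fun i => MeasurableSet.inter ?_ ?_
    · exact measurableSet_lt measurable_const (measurable_snd.eval)
    · exact measurableSet_lt (measurable_snd.eval) ((hZ i).comp measurable_fst)
  have step1 : ∀ ω, ∏ i, ENNReal.ofReal (Z i ω)
      = ∫⁻ t : Fin d → ℝ, E.indicator 1 (ω, t) := by
    intro ω
    have hfun : (fun t : Fin d → ℝ => E.indicator (1 : Ω × (Fin d → ℝ) → ℝ≥0∞) (ω, t))
        = (univ.pi fun i => Ioo 0 (Z i ω)).indicator 1 := by
      ext t
      simp only [Set.indicator, hE, mem_setOf_eq, Set.mem_univ_pi, Pi.one_apply]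
    rw [hfun, lintegral_indicator_one (MeasurableSet.univ_pi fun i => measurableSet_Ioo)]
    rw [volume_pi_pi]
    simp [Real.volume_Ioo]
  have step2 : ∀ t : Fin d → ℝ, (∫⁻ ω, E.indicator 1 (ω, t) ∂μ)
      = μ {ω | ∀ i, t i ∈ Ioo 0 (Z i ω)} := by
    intro t
    have hfun : (fun ω => E.indicator (1 : Ω × (Fin d → ℝ) → ℝ≥0∞) (ω, t))
        = ({ω | ∀ i, t i ∈ Ioo 0 (Z i ω)}).indicator 1 := by
      ext ω
      simp only [Set.indicator, hE, mem_setOf_eq, Pi.one_apply]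
    have hm : MeasurableSet {ω | ∀ i, t i ∈ Ioo 0 (Z i ω)} :=
      hEm.preimage (measurable_prodMk_right (y := t))
    rw [hfun, lintegral_indicator_one hm]
  calc ∫⁻ ω, ∏ i, ENNReal.ofReal (Z i ω) ∂μ
      = ∫⁻ ω, (∫⁻ t : Fin d → ℝ, E.indicator 1 (ω, t)) ∂μ := by
        exact lintegral_congr step1
    _ = ∫⁻ t : Fin d → ℝ, (∫⁻ ω, E.indicator 1 (ω, t) ∂μ) := by
        apply lintegral_lintegral_swap
        exact ((measurable_one.indicator hEm).aemeasurable)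
    _ = ∫⁻ t : Fin d → ℝ, μ {ω | ∀ i, t i ∈ Ioo 0 (Z i ω)} := lintegral_congr step2

lemma measurable_quantile_slice {d : ℕ} (G : Fin d → Measure ℝ)
    [∀ i, IsProbabilityMeasure (G i)] (t : Fin d → ℝ) :
    MeasurableSet {u : ℝ | ∀ i, t i ∈ Ioo 0 (quantile (G i) u)} := by
  have hdesc : {u : ℝ | ∀ i, t i ∈ Ioo 0 (quantile (G i) u)}
      = ⋂ i, ({u : ℝ | 0 < t i} ∩ {u : ℝ | t i < quantile (G i) u}) := by
    ext u
    simp only [mem_setOf_eq, mem_iInter, mem_inter_iff, mem_Ioo]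
  rw [hdesc]
  refine MeasurableSet.iInter fun i => MeasurableSet.inter (MeasurableSet.const _) ?_
  exact measurableSet_lt measurable_const (measurable_quantile (G i))

lemma slice_le {d : ℕ} (hd0 : 0 < d) {Ω : Type*} [MeasurableSpace Ω] (μ : Measure Ω)
    [IsProbabilityMeasure μ] (G : Fin d → Measure ℝ) [∀ i, IsProbabilityMeasure (G i)]
    (W : Fin d → Ω → ℝ) (hW : ∀ i, Measurable (W i)) (hlaw : ∀ i, μ.map (W i) = G i)
    (t : Fin d → ℝ) :
    μ {ω | ∀ i, t i ∈ Ioo 0 (W i ω)}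
      ≤ (volume.restrict (Ioo (0:ℝ) 1)) {u | ∀ i, t i ∈ Ioo 0 (quantile (G i) u)} := by
  by_cases hpos : ∀ i, 0 < t i
  · haveI : Nonempty (Fin d) := ⟨⟨0, hd0⟩⟩
    set c : ℝ := Finset.univ.sup' Finset.univ_nonempty
      (fun i => ((G i) (Iic (t i))).toReal) with hc
    obtain ⟨j, _, hj⟩ := Finset.exists_mem_eq_sup' Finset.univ_nonempty
      (fun i => ((G i) (Iic (t i))).toReal)
    have hc0 : 0 ≤ c := by rw [hc, hj]; exact ENNReal.toReal_nonneg
    have hRset : {u : ℝ | ∀ i, t i ∈ Ioo 0 (quantile (G i) u)} ∩ Ioo 0 1 = Ioo c 1 := by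
      ext u
      simp only [mem_inter_iff, mem_setOf_eq, mem_Ioo]
      constructor
      · rintro ⟨hall, hu0, hu1⟩
        refine ⟨?_, hu1⟩
        rw [hc, Finset.sup'_lt_iff]
        intro i _
        exact (lt_quantile_iff (G i) hu0 hu1).1 (hall i).2
      · rintro ⟨hcu, hu1⟩
        have hu0 : 0 < u := lt_of_le_of_lt hc0 hcu
        refine ⟨fun i => ⟨hpos i, ?_⟩, hu0, hu1⟩
        rw [lt_quantile_iff (G i) hu0 hu1]
        refine lt_of_le_of_lt ?_ hcu
        rw [hc]
        exact Finset.le_sup' (fun i => ((G i) (Iic (t i))).toReal) (Finset.mem_univ i)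
    rw [Measure.restrict_apply (measurable_quantile_slice G t), hRset, Real.volume_Ioo]
    have hsub : {ω | ∀ i, t i ∈ Ioo 0 (W i ω)} ⊆ {ω | t j < W j ω} := fun ω h => (h j).2
    refine le_trans (measure_mono hsub) ?_
    have hmap : μ {ω | t j < W j ω} = (G j) (Ioi (t j)) := by
      rw [← hlaw j, Measure.map_apply (hW j) measurableSet_Ioi]
      rfl
    rw [hmap]
    have hcompl : (G j) (Ioi (t j)) = 1 - (G j) (Iic (t j)) := by
      rw [← compl_Iic, measure_compl measurableSet_Iic (measure_ne_top _ _), measure_univ]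
    have hcj : c = ((G j) (Iic (t j))).toReal := by rw [hc]; exact hj
    rw [hcompl, hcj]
    rw [ENNReal.ofReal_sub _ ENNReal.toReal_nonneg, ENNReal.ofReal_one,
      ENNReal.ofReal_toReal (measure_ne_top _ _)]
  · push_neg at hpos
    obtain ⟨j, hj⟩ := hpos
    have : {ω | ∀ i, t i ∈ Ioo 0 (W i ω)} = ∅ := by
      ext ω
      simp only [mem_setOf_eq, mem_empty_iff_false, iff_false, not_forall]
      exact ⟨j, fun h => absurd h.1 (not_lt.2 hj)⟩
    rw [this, measure_empty]
    exact zero_le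

lemma expected_prod_bound {d : ℕ} (hd0 : 0 < d) {Ω : Type*} [MeasurableSpace Ω]
    (μ : Measure Ω) [IsProbabilityMeasure μ] (G : Fin d → Measure ℝ)
    [∀ i, IsProbabilityMeasure (G i)] (hGnn : ∀ i, (G i) (Iio 0) = 0)
    (W : Fin d → Ω → ℝ) (hW : ∀ i, Measurable (W i)) (hWnn : ∀ i ω, 0 ≤ W i ω)
    (hlaw : ∀ i, μ.map (W i) = G i)
    (hint : Integrable (fun ω => ∏ i, W i ω) μ)
    (hintQ : IntegrableOn (fun u => ∏ i, quantile (G i) u) (Ioo (0:ℝ) 1) volume) :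
    ∫ ω, ∏ i, W i ω ∂μ ≤ ∫ u in Ioo (0:ℝ) 1, ∏ i, quantile (G i) u := by
  have hWm : Measurable fun ω => ∏ i, W i ω := Finset.measurable_prod _ fun i _ => hW i
  have hQm : Measurable fun u => ∏ i, quantile (G i) u :=
    Finset.measurable_prod _ fun i _ => measurable_quantile (G i)
  have hQnn : ∀ᵐ u ∂(volume.restrict (Ioo (0:ℝ) 1)), 0 ≤ ∏ i, quantile (G i) u := by
    filter_upwards [ae_restrict_mem measurableSet_Ioo] with u hu
    exact Finset.prod_nonneg fun i _ => quantile_nonneg_of_null_Iio (hGnn i) hu.1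
  set LY : ℝ≥0∞ := ∫⁻ ω, ∏ i, ENNReal.ofReal (W i ω) ∂μ with hLY
  set LR : ℝ≥0∞ := ∫⁻ u in Ioo (0:ℝ) 1, ∏ i, ENNReal.ofReal (quantile (G i) u) with hLR
  have hle : LY ≤ LR := by
    rw [hLY, hLR, prodlayer μ W hW,
      prodlayer (volume.restrict (Ioo (0:ℝ) 1)) (fun i => quantile (G i))
        (fun i => measurable_quantile (G i))]
    exact lintegral_mono fun t => slice_le hd0 μ G W hW hlaw t
  have eq1 : ∫ ω, ∏ i, W i ω ∂μ = LY.toReal := by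
    rw [integral_eq_lintegral_of_nonneg_ae
      (Filter.Eventually.of_forall fun ω => Finset.prod_nonneg fun i _ => hWnn i ω)
      hWm.aestronglyMeasurable, hLY]
    congr 1
    exact lintegral_congr fun ω => by
      rw [ENNReal.ofReal_prod_of_nonneg fun i _ => hWnn i ω]
  have eq2 : ∫ u in Ioo (0:ℝ) 1, ∏ i, quantile (G i) u = LR.toReal := by
    rw [integral_eq_lintegral_of_nonneg_ae hQnn hQm.aestronglyMeasurable, hLR]
    congr 1
    apply lintegral_congr_ae
    filter_upwards [ae_restrict_mem measurableSet_Ioo] with u hu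
    exact ENNReal.ofReal_prod_of_nonneg fun i _ =>
      quantile_nonneg_of_null_Iio (hGnn i) hu.1
  have hLRfin : LR ≠ ⊤ := by
    have hfin := hintQ.2
    rw [hasFiniteIntegral_iff_norm] at hfin
    refine ne_of_lt (lt_of_le_of_lt ?_ hfin)
    rw [hLR]
    apply lintegral_mono_ae
    filter_upwards [ae_restrict_mem measurableSet_Ioo] with u hu
    rw [← ENNReal.ofReal_prod_of_nonneg
      (fun i _ => quantile_nonneg_of_null_Iio (hGnn i) hu.1)]
    exact ENNReal.ofReal_le_ofReal (by rw [Real.norm_eq_abs]; exact le_abs_self _)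
  rw [eq1, eq2]
  exact ENNReal.toReal_mono hLRfin hle

end Layer

end QAux

open QAux in
/-- For `d` even and symmetric zero-mean marginals, the infimum of the expected product
equals `−E(∏ G_i⁻¹(U))` and is attained by `X_i = F_i⁻¹(U)` for `i < d` and
`X_d = F_d⁻¹(1−U)`. -/
theorem stmt_7 (d : ℕ) (hd : Even d) (hd0 : 0 < d) (F : Fin d → Measure ℝ)
    [∀ i, IsProbabilityMeasure (F i)]
    (hsym : ∀ i, (F i).map (fun x => -x) = F i)
    (hL2 : ∀ i, MemLp (id : ℝ → ℝ) 2 (F i))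
    (hIntQ : IntegrableOn
      (fun u => ∏ i, quantile ((F i).map (fun x => |x|)) u) (Icc (0:ℝ) 1) volume)
    (hIntA : IntegrableOn
      (fun u => ∏ i : Fin d, (if (i : ℕ) = d - 1 then quantile (F i) (1 - u) else quantile (F i) u))
      (Icc (0:ℝ) 1) volume) :
    (∫ u in Icc (0:ℝ) 1,
        ∏ i : Fin d, (if (i : ℕ) = d - 1 then quantile (F i) (1 - u) else quantile (F i) u)
        = -∫ u in Icc (0:ℝ) 1, ∏ i, quantile ((F i).map (fun x => |x|)) u) ∧
    (∀ (Ω : Type*) [MeasurableSpace Ω] (μ : Measure Ω) [IsProbabilityMeasure μ]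
        (Y : Fin d → Ω → ℝ), (∀ i, Measurable (Y i)) → (∀ i, μ.map (Y i) = F i) →
        Integrable (fun ω => ∏ i, Y i ω) μ →
        ∫ u in Icc (0:ℝ) 1,
            ∏ i : Fin d, (if (i : ℕ) = d - 1 then quantile (F i) (1 - u) else quantile (F i) u)
          ≤ ∫ ω, ∏ i, Y i ω ∂μ) := by
  classical
  haveI instG : ∀ i, IsProbabilityMeasure ((F i).map (fun x => |x|)) := fun i =>
    Measure.isProbabilityMeasure_map measurable_abs.aemeasurable
  set lasti : Fin d := ⟨d - 1, by omega⟩ with hlasti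
  set Bf : ℝ → ℝ := fun u => ∏ i, quantile ((F i).map (fun x => |x|)) u with hBf
  set Af : ℝ → ℝ := fun u =>
    ∏ i : Fin d, (if (i : ℕ) = d - 1 then quantile (F i) (1 - u) else quantile (F i) u) with hAf
  -- pointwise a.e. identities
  have hprodneg : ∀ (s : Finset (Fin d)) (g : Fin d → ℝ),
      ∏ i ∈ s, (-g i) = (-1 : ℝ) ^ s.card * ∏ i ∈ s, g i := by
    intro s g
    rw [← Finset.prod_const, ← Finset.prod_mul_distrib]
    exact Finset.prod_congr rfl fun i _ => (neg_one_mul _).symm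
  have hcard : (Finset.univ.erase lasti).card = d - 1 := by
    rw [Finset.card_erase_of_mem (Finset.mem_univ _), Finset.card_univ, Fintype.card_fin]
  have hodd : Odd (d - 1) := Nat.Even.sub_odd (by omega) hd odd_one
  have haeU : ∀ᵐ u ∂(volume.restrict (Ioo (1/2 : ℝ) 1)), Af u = -Bf (2*u - 1) := by
    have hsub : Ioo (1/2 : ℝ) 1 ⊆ Ioo 0 1 := fun x hx => ⟨by linarith [hx.1], hx.2⟩
    filter_upwards [ae_restrict_mem measurableSet_Ioo,
      ae_restrict_of_ae_restrict_of_subset hsub (quantile_reflect_ae (hsym lasti))]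
      with u hu hrefl
    have hu0 : (0:ℝ) < 2*u - 1 := by linarith [hu.1]
    have hu1 : 2*u - 1 < 1 := by linarith [hu.2]
    have hqa : ∀ i : Fin d, quantile ((F i).map (fun x => |x|)) (2*u - 1)
        = quantile (F i) u := by
      intro i
      rw [quantile_abs (hsym i) hu0 hu1]
      congr 1
      ring
    simp only [hAf, hBf]
    rw [← Finset.mul_prod_erase Finset.univ _ (Finset.mem_univ lasti),
      ← Finset.mul_prod_erase Finset.univ
        (fun i => quantile ((F i).map (fun x => |x|)) (2*u - 1)) (Finset.mem_univ lasti)]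
    rw [if_pos (rfl : ((lasti : Fin d) : ℕ) = d - 1), hrefl]
    have herase : ∏ i ∈ Finset.univ.erase lasti,
        (if (i : ℕ) = d - 1 then quantile (F i) (1 - u) else quantile (F i) u)
        = ∏ i ∈ Finset.univ.erase lasti, quantile ((F i).map (fun x => |x|)) (2*u - 1) := by
      refine Finset.prod_congr rfl fun i hi => ?_
      rw [if_neg fun h => (Finset.ne_of_mem_erase hi) (Fin.ext h), ← hqa i]
    rw [herase, hqa lasti]
    ring
  have haeL : ∀ᵐ u ∂(volume.restrict (Ioo (0:ℝ) (1/2))), Af u = -Bf (1 - 2*u) := by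
    have hsub : Ioo (0:ℝ) (1/2) ⊆ Ioo 0 1 := fun x hx => ⟨hx.1, by linarith [hx.2]⟩
    filter_upwards [ae_restrict_mem measurableSet_Ioo,
      ae_restrict_of_ae_restrict_of_subset hsub
        (ae_all_iff.2 fun i : Fin d => quantile_reflect_ae (hsym i))] with u hu hrefl
    have hu0 : (0:ℝ) < 1 - 2*u := by linarith [hu.2]
    have hu1 : 1 - 2*u < 1 := by linarith [hu.1]
    have hqa : ∀ i : Fin d, quantile ((F i).map (fun x => |x|)) (1 - 2*u)
        = quantile (F i) (1 - u) := by
      intro i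
      rw [quantile_abs (hsym i) hu0 hu1]
      congr 1
      ring
    simp only [hAf, hBf]
    rw [← Finset.mul_prod_erase Finset.univ _ (Finset.mem_univ lasti),
      ← Finset.mul_prod_erase Finset.univ
        (fun i => quantile ((F i).map (fun x => |x|)) (1 - 2*u)) (Finset.mem_univ lasti)]
    rw [if_pos (rfl : ((lasti : Fin d) : ℕ) = d - 1), ← hqa lasti]
    have herase : ∏ i ∈ Finset.univ.erase lasti,
        (if (i : ℕ) = d - 1 then quantile (F i) (1 - u) else quantile (F i) u)
        = ∏ i ∈ Finset.univ.erase lasti,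
            (-(quantile ((F i).map (fun x => |x|)) (1 - 2*u))) := by
      refine Finset.prod_congr rfl fun i hi => ?_
      rw [if_neg fun h => (Finset.ne_of_mem_erase hi) (Fin.ext h), hqa i]
      have := hrefl i
      linarith
    rw [herase, hprodneg, hcard, Odd.neg_one_pow hodd]
    ring
  -- Part 1
  have key1 : ∫ u in Icc (0:ℝ) 1, Af u = -∫ u in Icc (0:ℝ) 1, Bf u := by
    have hiA1 : IntervalIntegrable Af volume 0 (1/2) := by
      rw [intervalIntegrable_iff_integrableOn_Ioc_of_le (by norm_num)]
      exact hIntA.mono_set fun x hx => ⟨le_of_lt hx.1, le_trans hx.2 (by norm_num)⟩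
    have hiA2 : IntervalIntegrable Af volume (1/2) 1 := by
      rw [intervalIntegrable_iff_integrableOn_Ioc_of_le (by norm_num)]
      exact hIntA.mono_set fun x hx => ⟨le_trans (by norm_num) (le_of_lt hx.1), hx.2⟩
    have e1 : ∫ u in (0:ℝ)..(1/2), Af u = -((2:ℝ)⁻¹ • ∫ u in (0:ℝ)..1, Bf u) := by
      have c1 : ∫ u in (0:ℝ)..(1/2), Af u = ∫ u in Ioo (0:ℝ) (1/2), Af u := by
        rw [intervalIntegral.integral_of_le (by norm_num),
          ← Measure.restrict_congr_set Ioo_ae_eq_Ioc]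
      have c2 : ∫ u in Ioo (0:ℝ) (1/2), Af u = -∫ u in Ioo (0:ℝ) (1/2), Bf (1 - 2*u) := by
        rw [integral_congr_ae haeL, integral_neg]
      have c3 : ∫ u in Ioo (0:ℝ) (1/2), Bf (1 - 2*u) = ∫ u in (0:ℝ)..(1/2), Bf (1 - 2*u) := by
        rw [intervalIntegral.integral_of_le (by norm_num),
          ← Measure.restrict_congr_set Ioo_ae_eq_Ioc]
      have c4 : (∫ u in (0:ℝ)..(1/2), Bf (1 - 2*u))
          = (2:ℝ)⁻¹ • ∫ u in (0:ℝ)..1, Bf u := by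
        have h1 : (∫ x in (0:ℝ)..(1/2), Bf (1 - 2*x))
            = (2:ℝ)⁻¹ • ∫ x in (2*(0:ℝ))..(2*(1/2:ℝ)), Bf (1 - x) :=
          intervalIntegral.integral_comp_mul_left (f := fun y => Bf (1 - y)) two_ne_zero
        have h2 : (∫ x in (2*(0:ℝ))..(2*(1/2:ℝ)), Bf (1 - x))
            = ∫ x in (1 - 2*(1/2:ℝ))..(1 - 2*(0:ℝ)), Bf x :=
          intervalIntegral.integral_comp_sub_left (f := Bf) 1
        rw [h1, h2]
        norm_num
      rw [c1, c2, c3, c4]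
    have e2 : ∫ u in (1/2:ℝ)..1, Af u = -((2:ℝ)⁻¹ • ∫ u in (0:ℝ)..1, Bf u) := by
      have c1 : ∫ u in (1/2:ℝ)..1, Af u = ∫ u in Ioo (1/2:ℝ) 1, Af u := by
        rw [intervalIntegral.integral_of_le (by norm_num),
          ← Measure.restrict_congr_set Ioo_ae_eq_Ioc]
      have c2 : ∫ u in Ioo (1/2:ℝ) 1, Af u = -∫ u in Ioo (1/2:ℝ) 1, Bf (2*u - 1) := by
        rw [integral_congr_ae haeU, integral_neg]
      have c3 : ∫ u in Ioo (1/2:ℝ) 1, Bf (2*u - 1) = ∫ u in (1/2:ℝ)..1, Bf (2*u - 1) := by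
        rw [intervalIntegral.integral_of_le (by norm_num),
          ← Measure.restrict_congr_set Ioo_ae_eq_Ioc]
      have c4 : (∫ u in (1/2:ℝ)..1, Bf (2*u - 1))
          = (2:ℝ)⁻¹ • ∫ u in (0:ℝ)..1, Bf u := by
        have h1 : (∫ x in (1/2:ℝ)..1, Bf (2*x - 1))
            = (2:ℝ)⁻¹ • ∫ x in (2*(1/2:ℝ))..(2*(1:ℝ)), Bf (x - 1) :=
          intervalIntegral.integral_comp_mul_left (f := fun y => Bf (y - 1)) two_ne_zero
        have h2 : (∫ x in (2*(1/2:ℝ))..(2*(1:ℝ)), Bf (x - 1))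
            = ∫ x in (2*(1/2:ℝ) - 1)..(2*(1:ℝ) - 1), Bf x :=
          intervalIntegral.integral_comp_sub_right (f := Bf) 1
        rw [h1, h2]
        norm_num
      rw [c1, c2, c3, c4]
    have hsplit := intervalIntegral.integral_add_adjacent_intervals hiA1 hiA2
    have eqA : ∫ u in Icc (0:ℝ) 1, Af u = ∫ u in (0:ℝ)..1, Af u := by
      rw [MeasureTheory.integral_Icc_eq_integral_Ioc,
        intervalIntegral.integral_of_le zero_le_one]
    have eqB : ∫ u in Icc (0:ℝ) 1, Bf u = ∫ u in (0:ℝ)..1, Bf u := by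
      rw [MeasureTheory.integral_Icc_eq_integral_Ioc,
        intervalIntegral.integral_of_le zero_le_one]
    rw [eqA, eqB, ← hsplit, e1, e2, smul_eq_mul]
    ring
  refine ⟨key1, ?_⟩
  -- Part 2
  intro Ω mΩ μ hμp Y hYm hYlaw hYint
  rw [key1]
  have hint_abs : Integrable (fun ω => ∏ i, |Y i ω|) μ := by
    refine hYint.abs.congr (Filter.Eventually.of_forall fun ω => ?_)
    exact Finset.abs_prod _ _
  have hlawabs : ∀ i, μ.map (fun ω => |Y i ω|) = (F i).map (fun x => |x|) := by
    intro i
    rw [← hYlaw i, Measure.map_map measurable_abs (hYm i)]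
    rfl
  have hbound := expected_prod_bound hd0 μ (fun i => (F i).map (fun x => |x|))
    (fun i => abs_map_null_Iio) (fun i ω => |Y i ω|) (fun i => (hYm i).abs)
    (fun i ω => abs_nonneg _) hlawabs hint_abs (hIntQ.mono_set Ioo_subset_Icc_self)
  have hIooIcc : ∫ u in Ioo (0:ℝ) 1, Bf u = ∫ u in Icc (0:ℝ) 1, Bf u := by
    rw [Measure.restrict_congr_set Ioo_ae_eq_Icc]
  have habs : -∫ ω, ∏ i, Y i ω ∂μ ≤ ∫ ω, ∏ i, |Y i ω| ∂μ := by
    rw [← integral_neg]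
    refine integral_mono hYint.neg hint_abs fun ω => ?_
    simp only [Pi.neg_apply]
    calc -∏ i, Y i ω ≤ |∏ i, Y i ω| := neg_le_abs _
      _ = ∏ i, |Y i ω| := Finset.abs_prod _ _
  linarith [hbound, habs, hIooIcc]
end

section
/- If X₁,…,X_d are nonnegative random variables with X_i ~ F_i, then E(X₁⋯X_d) ≤ E(∏_{i=1}^d F_i⁻¹(U)) where U ~ Uniform[0,1]; i.e., the comonotonic coupling maximizes the expected product of nonnegative random variables with fixed marginals. -/
open MeasureTheory Set

open ProbabilityTheory Filter in
lemma quantile_lt_iff (ν : Measure ℝ) [IsProbabilityMeasure ν] {u : ℝ}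
    (hu0 : 0 < u) (hu1 : u < 1) (t : ℝ) :
    t < quantile ν u ↔ cdf ν t < u := by
  have hSeq : {x : ℝ | u ≤ (ν (Iic x)).toReal} = {x : ℝ | u ≤ cdf ν x} := by
    ext x; simp [cdf_eq_real, measureReal_def]
  rw [quantile, hSeq]
  have hne : {x : ℝ | u ≤ cdf ν x}.Nonempty := by
    obtain ⟨x, hx⟩ := ((tendsto_cdf_atTop ν).eventually (eventually_ge_nhds hu1)).exists
    exact ⟨x, hx⟩
  have hbdd : BddBelow {x : ℝ | u ≤ cdf ν x} := by
    obtain ⟨x0, hx0⟩ := ((tendsto_cdf_atBot ν).eventually_lt_const hu0).exists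
    exact ⟨x0, fun x hx => le_of_lt ((monotone_cdf ν).reflect_lt (lt_of_lt_of_le hx0 hx))⟩
  constructor
  · intro h
    by_contra hc
    push_neg at hc
    exact (csInf_le hbdd hc).not_gt h
  · intro h
    have h1 : ∀ᶠ y in nhdsWithin t (Ici t), cdf ν y < u :=
      ((cdf ν).right_continuous t).eventually_lt_const h
    have h2 : ∀ᶠ y in nhdsWithin t (Ioi t), cdf ν y < u :=
      h1.filter_mono (nhdsWithin_mono t Ioi_subset_Ici_self)
    obtain ⟨y, hy1, hy2⟩ := (h2.and eventually_mem_nhdsWithin).exists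
    calc t < y := hy2
      _ ≤ sInf {x : ℝ | u ≤ cdf ν x} :=
        le_csInf hne fun x hx =>
          le_of_lt ((monotone_cdf ν).reflect_lt (lt_of_lt_of_le hy1 hx))

open ProbabilityTheory in
lemma quantile_nonneg' (ν : Measure ℝ) [IsProbabilityMeasure ν] (h0 : ν (Iio 0) = 0)
    {u : ℝ} (hu0 : 0 < u) (hu1 : u < 1) : 0 ≤ quantile ν u := by
  refine le_of_forall_lt fun t ht => ?_
  rw [quantile_lt_iff ν hu0 hu1]
  have h : ν (Iic t) = 0 := measure_mono_null (Iic_subset_Iio.mpr ht) h0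
  rwa [cdf_eq_real, measureReal_def, h, ENNReal.toReal_zero]

lemma lint_slice {α β : Type*} [MeasurableSpace α] [MeasurableSpace β] (m : Measure β)
    {S : Set (α × β)} (hS : MeasurableSet S) (a : α) :
    ∫⁻ b, S.indicator 1 (a, b) ∂m = m {b | (a, b) ∈ S} := by
  have hms : MeasurableSet {b | (a, b) ∈ S} := measurable_prodMk_left hS
  calc ∫⁻ b, S.indicator 1 (a, b) ∂m
      = ∫⁻ b, ({b | (a, b) ∈ S}).indicator 1 b ∂m := by
        refine lintegral_congr fun b => ?_
        by_cases h : (a, b) ∈ S <;> simp [Set.indicator_apply, h]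
    _ = m {b | (a, b) ∈ S} := lintegral_indicator_one hms

lemma lint_slice' {α β : Type*} [MeasurableSpace α] [MeasurableSpace β] (m : Measure α)
    {S : Set (α × β)} (hS : MeasurableSet S) (b : β) :
    ∫⁻ a, S.indicator 1 (a, b) ∂m = m {a | (a, b) ∈ S} := by
  have hms : MeasurableSet {a | (a, b) ∈ S} := measurable_prodMk_right hS
  calc ∫⁻ a, S.indicator 1 (a, b) ∂m
      = ∫⁻ a, ({a | (a, b) ∈ S}).indicator 1 a ∂m := by
        refine lintegral_congr fun a => ?_
        by_cases h : (a, b) ∈ S <;> simp [Set.indicator_apply, h]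
    _ = m {a | (a, b) ∈ S} := lintegral_indicator_one hms

/-- For nonnegative random variables, the comonotonic coupling maximizes the expected
product: `E(X₁⋯X_d) ≤ E(∏ F_i⁻¹(U))`. -/
theorem stmt_11 {Ω : Type*} [MeasurableSpace Ω] (μ : Measure Ω) [IsProbabilityMeasure μ]
    (d : ℕ) (X : Fin d → Ω → ℝ) (hm : ∀ i, Measurable (X i))
    (hnonneg : ∀ i, ∀ᵐ ω ∂μ, 0 ≤ X i ω)
    (hInt : Integrable (fun ω => ∏ i, X i ω) μ)
    (hIntQ : IntegrableOn
      (fun u => ∏ i, quantile (μ.map (X i)) u) (Icc (0:ℝ) 1) volume) :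
    ∫ ω, ∏ i, X i ω ∂μ ≤ ∫ u in Icc (0:ℝ) 1, ∏ i, quantile (μ.map (X i)) u := by
  classical
  set ν : Fin d → Measure ℝ := fun i => μ.map (X i) with hν
  have hprob : ∀ i, IsProbabilityMeasure (ν i) := fun i =>
    Measure.isProbabilityMeasure_map (hm i).aemeasurable
  set Q : Fin d → ℝ → ℝ := fun i u => quantile (ν i) u with hQ
  set F : Fin d → ℝ → ℝ := fun i => ⇑(ProbabilityTheory.cdf (ν i)) with hF
  have hFm : ∀ i, Measurable (F i) := fun i =>
    (ProbabilityTheory.monotone_cdf (ν i)).measurable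
  have hν0 : ∀ i, ν i (Iio 0) = 0 := by
    intro i
    rw [hν, Measure.map_apply (hm i) measurableSet_Iio]
    have h1 : X i ⁻¹' Iio 0 = {ω | ¬ 0 ≤ X i ω} := by ext ω; simp [not_le]
    rw [h1]
    exact ae_iff.mp (hnonneg i)
  set S : Set (Ω × (Fin d → ℝ)) := {p | ∀ i, p.2 i ∈ Ioo 0 (X i p.1)} with hSdef
  set T : Set (ℝ × (Fin d → ℝ)) := {p | ∀ i, 0 < p.2 i ∧ F i (p.2 i) < p.1} with hTdef
  have hSm : MeasurableSet S := by
    have h1 : S = ⋂ i, ({p : Ω × (Fin d → ℝ) | 0 < p.2 i} ∩ {p | p.2 i < X i p.1}) := by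
      ext p; simp [hSdef, Set.mem_Ioo]
    rw [h1]
    refine MeasurableSet.iInter fun i => ?_
    have hsi : Measurable fun p : Ω × (Fin d → ℝ) => p.2 i :=
      (measurable_pi_apply i).comp measurable_snd
    have hxi : Measurable fun p : Ω × (Fin d → ℝ) => X i p.1 :=
      (hm i).comp measurable_fst
    exact (measurableSet_lt measurable_const hsi).inter (measurableSet_lt hsi hxi)
  have hTm : MeasurableSet T := by
    have h1 : T = ⋂ i, ({p : ℝ × (Fin d → ℝ) | 0 < p.2 i}
        ∩ {p | F i (p.2 i) < p.1}) := by
      ext p; simp [hTdef]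
    rw [h1]
    refine MeasurableSet.iInter fun i => ?_
    have hsi : Measurable fun p : ℝ × (Fin d → ℝ) => p.2 i :=
      (measurable_pi_apply i).comp measurable_snd
    have hfi : Measurable fun p : ℝ × (Fin d → ℝ) => F i (p.2 i) := (hFm i).comp hsi
    have hfst : Measurable fun p : ℝ × (Fin d → ℝ) => p.1 := measurable_fst
    exact (measurableSet_lt measurable_const hsi).inter (measurableSet_lt hfi hfst)
  -- key pointwise inequality
  have keyK : ∀ t : Fin d → ℝ,
      μ {ω | (ω, t) ∈ S} ≤ (volume.restrict (Ioo (0:ℝ) 1)) {u | (u, t) ∈ T} := by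
    intro t
    by_cases hpos : ∀ i, 0 < t i
    · set a : ℝ := ⨆ i, F i (t i) with ha
      have ha0 : 0 ≤ a := Real.iSup_nonneg fun i => ProbabilityTheory.cdf_nonneg _ _
      have ha1 : a ≤ 1 := Real.iSup_le (fun i => ProbabilityTheory.cdf_le_one _ _) zero_le_one
      have hfa : ∀ i, F i (t i) ≤ a := fun i => by
        rw [ha]
        exact le_ciSup (f := fun i => F i (t i))
          (Set.Finite.bddAbove (Set.finite_range fun i => F i (t i))) i
      have hsub : Ioo a 1 ⊆ {u | (u, t) ∈ T} ∩ Ioo 0 1 := fun u hu =>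
        ⟨fun i => ⟨hpos i, lt_of_le_of_lt (hfa i) hu.1⟩, lt_of_le_of_lt ha0 hu.1, hu.2⟩
      have hRHS : ENNReal.ofReal (1 - a)
          ≤ (volume.restrict (Ioo (0:ℝ) 1)) {u | (u, t) ∈ T} := by
        rw [Measure.restrict_apply' measurableSet_Ioo]
        calc ENNReal.ofReal (1 - a) = volume (Ioo a 1) := by rw [Real.volume_Ioo]
          _ ≤ _ := measure_mono hsub
      refine le_trans ?_ hRHS
      rcases isEmpty_or_nonempty (Fin d) with hd | hd
      · have haz : a = 0 := by rw [ha, Real.iSup_of_isEmpty _]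
        rw [haz]
        simpa using prob_le_one
      · obtain ⟨j, hj⟩ := Finite.exists_max fun i => F i (t i)
        have haj : a = F j (t j) :=
          le_antisymm (Real.iSup_le hj (ProbabilityTheory.cdf_nonneg _ _)) (hfa j)
        have h1 : μ {ω | (ω, t) ∈ S} ≤ ν j (Ioi (t j)) := by
          rw [hν, Measure.map_apply (hm j) measurableSet_Ioi]
          exact measure_mono fun ω hω => (hω j).2
        haveI := hprob j
        have h2 : ν j (Ioi (t j)) = ENNReal.ofReal (1 - F j (t j)) := by
          rw [← compl_Iic, measure_compl measurableSet_Iic (measure_ne_top _ _), measure_univ,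
            ← ProbabilityTheory.ofReal_cdf,
            ENNReal.ofReal_sub _ (ProbabilityTheory.cdf_nonneg _ _), ENNReal.ofReal_one]
        rw [haj]
        exact h1.trans h2.le
    · push_neg at hpos
      obtain ⟨j, hj⟩ := hpos
      have h1 : {ω | (ω, t) ∈ S} = ∅ :=
        eq_empty_of_forall_notMem fun ω hω => absurd (hω j).1 (not_lt.mpr hj)
      simp [h1]
  -- main lintegral inequality
  have key : ∫⁻ ω, ∏ i, ENNReal.ofReal (X i ω) ∂μ
      ≤ ∫⁻ u in Ioo (0:ℝ) 1, ∏ i, ENNReal.ofReal (Q i u) := by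
    calc ∫⁻ ω, ∏ i, ENNReal.ofReal (X i ω) ∂μ
        = ∫⁻ ω, ∫⁻ t, S.indicator 1 (ω, t) ∂(volume : Measure (Fin d → ℝ)) ∂μ := by
          refine lintegral_congr fun ω => ?_
          rw [lint_slice _ hSm ω]
          have h1 : {t | (ω, t) ∈ S} = univ.pi fun i => Ioo 0 (X i ω) := by
            ext t; simp [hSdef, Set.mem_pi]
          rw [h1, volume_pi_pi]
          simp [Real.volume_Ioo]
      _ = ∫⁻ t, ∫⁻ ω, S.indicator 1 (ω, t) ∂μ
            ∂(volume : Measure (Fin d → ℝ)) :=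
          lintegral_lintegral_swap ((measurable_one.indicator hSm).aemeasurable)
      _ = ∫⁻ t, μ {ω | (ω, t) ∈ S} ∂(volume : Measure (Fin d → ℝ)) :=
          lintegral_congr fun t => lint_slice' _ hSm t
      _ ≤ ∫⁻ t, (volume.restrict (Ioo (0:ℝ) 1)) {u | (u, t) ∈ T}
            ∂(volume : Measure (Fin d → ℝ)) := lintegral_mono keyK
      _ = ∫⁻ t, ∫⁻ u, T.indicator 1 (u, t) ∂(volume.restrict (Ioo (0:ℝ) 1))
            ∂(volume : Measure (Fin d → ℝ)) :=
          lintegral_congr fun t => (lint_slice' _ hTm t).symm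
      _ = ∫⁻ u in Ioo (0:ℝ) 1, ∫⁻ t, T.indicator 1 (u, t)
            ∂(volume : Measure (Fin d → ℝ)) :=
          by
          have hswap := lintegral_lintegral_swap
            (μ := volume.restrict (Ioo (0:ℝ) 1)) (ν := (volume : Measure (Fin d → ℝ)))
            (f := fun u t => T.indicator 1 (u, t))
            ((measurable_one.indicator hTm).aemeasurable)
          exact hswap.symm
      _ = ∫⁻ u in Ioo (0:ℝ) 1, volume {t | (u, t) ∈ T} :=
          lintegral_congr fun u => lint_slice _ hTm u
      _ = ∫⁻ u in Ioo (0:ℝ) 1, ∏ i, ENNReal.ofReal (Q i u) := by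
          refine setLIntegral_congr_fun_ae measurableSet_Ioo (ae_of_all _ fun u hu => ?_)
          haveI : ∀ i, IsProbabilityMeasure (ν i) := hprob
          have h1 : {t | (u, t) ∈ T} = univ.pi fun i => Ioo 0 (Q i u) := by
            ext t
            simp only [hTdef, mem_setOf_eq, Set.mem_pi, mem_univ, true_implies, Set.mem_Ioo]
            exact forall_congr' fun i => and_congr_right fun _ =>
              (quantile_lt_iff (ν i) hu.1 hu.2 (t i)).symm
          rw [h1, volume_pi_pi]
          simp [Real.volume_Ioo]
  -- glue with Bochner integrals
  have hQnn : ∀ u ∈ Ioo (0:ℝ) 1, ∀ i, 0 ≤ Q i u := fun u hu i =>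
    haveI := hprob i
    quantile_nonneg' (ν i) (hν0 i) hu.1 hu.2
  have hXae : ∀ᵐ ω ∂μ, ∀ i, 0 ≤ X i ω := ae_all_iff.mpr hnonneg
  have hL : ∫ ω, ∏ i, X i ω ∂μ = (∫⁻ ω, ∏ i, ENNReal.ofReal (X i ω) ∂μ).toReal := by
    rw [integral_eq_lintegral_of_nonneg_ae
      (hXae.mono fun ω hω => Finset.prod_nonneg fun i _ => hω i) hInt.1]
    congr 1
    refine lintegral_congr_ae (hXae.mono fun ω hω => ?_)
    exact ENNReal.ofReal_prod_of_nonneg fun i _ => hω i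
  have hIntQ' : IntegrableOn (fun u => ∏ i, Q i u) (Ioo (0:ℝ) 1) volume :=
    hIntQ.mono_set Ioo_subset_Icc_self
  have hR : ∫ u in Icc (0:ℝ) 1, ∏ i, Q i u
      = (∫⁻ u in Ioo (0:ℝ) 1, ∏ i, ENNReal.ofReal (Q i u)).toReal := by
    rw [integral_Icc_eq_integral_Ioo, integral_eq_lintegral_of_nonneg_ae
      (((ae_restrict_mem measurableSet_Ioo).mono
        fun u hu => Finset.prod_nonneg fun i _ => hQnn u hu i)) hIntQ'.1]
    congr 1
    refine lintegral_congr_ae ((ae_restrict_mem measurableSet_Ioo).mono fun u hu => ?_)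
    exact ENNReal.ofReal_prod_of_nonneg fun i _ => hQnn u hu i
  have hfin : ∫⁻ u in Ioo (0:ℝ) 1, ∏ i, ENNReal.ofReal (Q i u) ≠ ⊤ := by
    refine ne_top_of_le_ne_top (ne_of_lt hIntQ'.2) (lintegral_mono_ae
      ((ae_restrict_mem measurableSet_Ioo).mono fun u hu => ?_))
    rw [← ENNReal.ofReal_prod_of_nonneg fun i _ => hQnn u hu i]
    exact Real.ofReal_le_enorm _
  rw [hL, hR]
  exact ENNReal.toReal_mono hfin key
end

section
/- Let d be odd and X₁,…,X_d nonpositive random variables with X_i ~ F_i. Then the infimum of E(X₁⋯X_d) over all couplings is attained by the comonotonic coupling X_i = F_i⁻¹(U), U ~ Uniform[0,1], and equals −E(∏_{i=1}^d G_i⁻¹(U)) where G_i is the distribution function of |X_i|. -/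
open MeasureTheory Set
open scoped ENNReal

section QBasics

variable {ν : Measure ℝ} [IsProbabilityMeasure ν] {u x y : ℝ}

lemma S_upper (hxy : x ≤ y) (hx : u ≤ (ν (Iic x)).toReal) : u ≤ (ν (Iic y)).toReal :=
  hx.trans (ENNReal.toReal_mono (measure_ne_top _ _) (measure_mono (Iic_subset_Iic.2 hxy)))

lemma exists_cdf_lt (hu : 0 < u) : ∃ x : ℝ, (ν (Iic x)).toReal < u := by
  have hemp : ⋂ n : ℕ, Iic (-(n:ℝ)) = (∅ : Set ℝ) := by
    apply eq_empty_iff_forall_notMem.2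
    intro x hx
    obtain ⟨n, hn⟩ := exists_nat_gt (-x)
    exact absurd (mem_iInter.1 hx n) (by simp only [mem_Iic]; linarith)
  have htend : Filter.Tendsto (fun n : ℕ => ν (Iic (-(n:ℝ)))) Filter.atTop (nhds 0) := by
    have := tendsto_measure_iInter_atTop (μ := ν)
      (s := fun n : ℕ => Iic (-(n:ℝ)))
      (fun n => measurableSet_Iic.nullMeasurableSet)
      (fun m n hmn => Iic_subset_Iic.2 (by exact_mod_cast neg_le_neg (Nat.cast_le.2 hmn)))
      ⟨0, measure_ne_top _ _⟩
    rwa [hemp, measure_empty] at this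
  have : ∀ᶠ n : ℕ in Filter.atTop, ν (Iic (-(n:ℝ))) < ENNReal.ofReal u :=
    htend.eventually_lt_const (by simpa using hu)
  obtain ⟨n, hn⟩ := this.exists
  exact ⟨-(n:ℝ), ENNReal.toReal_lt_of_lt_ofReal hn⟩

lemma S_bddBelow (hu : 0 < u) : BddBelow {x : ℝ | u ≤ (ν (Iic x)).toReal} := by
  obtain ⟨x₀, hx₀⟩ := exists_cdf_lt (ν := ν) hu
  refine ⟨x₀, fun s hs => ?_⟩
  by_contra h
  push_neg at h
  exact absurd (S_upper h.le hs) (not_le.2 hx₀)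

lemma S_nonempty (hu : u < 1) : ∃ x : ℝ, u ≤ (ν (Iic x)).toReal := by
  rcases le_or_gt u 0 with h0 | h0
  · exact ⟨0, h0.trans ENNReal.toReal_nonneg⟩
  have htend : Filter.Tendsto (fun x : ℝ => ν (Iic x)) Filter.atTop (nhds 1) := by
    simpa using tendsto_measure_Iic_atTop (μ := ν)
  have : ∀ᶠ x : ℝ in Filter.atTop, ENNReal.ofReal u < ν (Iic x) :=
    htend.eventually_const_lt (by
      rw [← ENNReal.ofReal_one]
      exact ENNReal.ofReal_lt_ofReal_iff_of_nonneg h0.le |>.2 hu)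
  obtain ⟨x, hx⟩ := this.exists
  exact ⟨x, by
    rw [← ENNReal.ofReal_le_iff_le_toReal (measure_ne_top _ _)]
    exact hx.le⟩

lemma quantile_mem (hu : 0 < u) (hne : ∃ x : ℝ, u ≤ (ν (Iic x)).toReal) :
    u ≤ (ν (Iic (quantile ν u))).toReal := by
  set S := {x : ℝ | u ≤ (ν (Iic x)).toReal} with hS
  have hSne : S.Nonempty := hne
  have hSbdd : BddBelow S := S_bddBelow hu
  set m := quantile ν u with hm
  have hmem : ∀ ε : ℝ, 0 < ε → m + ε ∈ S := by
    intro ε hε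
    obtain ⟨s, hsS, hs⟩ := (csInf_lt_iff hSbdd hSne).1 (by
      show sInf S < m + ε; rw [hm]; unfold quantile; rw [← hS]; linarith [le_refl (sInf S)])
    exact S_upper hs.le hsS
  have hIic : Iic m = ⋂ n : ℕ, Iic (m + 1/(n+1)) := by
    apply Subset.antisymm
    · exact subset_iInter fun n => Iic_subset_Iic.2 (le_add_of_nonneg_right (by positivity))
    · intro x hx
      simp only [mem_iInter, mem_Iic] at hx ⊢
      refine le_of_forall_pos_le_add fun ε hε => ?_
      obtain ⟨n, hn⟩ := exists_nat_one_div_lt hε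
      exact (hx n).trans (by linarith)
  have htend : Filter.Tendsto (fun n : ℕ => ν (Iic (m + 1/(n+1)))) Filter.atTop (nhds (ν (Iic m))) := by
    rw [hIic]
    exact tendsto_measure_iInter_atTop (fun n => measurableSet_Iic.nullMeasurableSet)
      (fun a b hab => Iic_subset_Iic.2 (by
        have : 1/((b:ℝ)+1) ≤ 1/((a:ℝ)+1) := by
          apply one_div_le_one_div_of_le (by positivity)
          have := (Nat.cast_le (α := ℝ)).2 hab; linarith
        linarith))
      ⟨0, measure_ne_top _ _⟩
  have hge : ENNReal.ofReal u ≤ ν (Iic m) := by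
    refine ge_of_tendsto htend (Filter.Eventually.of_forall fun n => ?_)
    have := hmem (1/(n+1)) (by positivity)
    exact (ENNReal.ofReal_le_iff_le_toReal (measure_ne_top _ _)).2 this
  exact (ENNReal.ofReal_le_iff_le_toReal (measure_ne_top _ _)).1 hge

lemma quantile_le_iff (hu : 0 < u) (hne : ∃ x : ℝ, u ≤ (ν (Iic x)).toReal) :
    quantile ν u ≤ x ↔ u ≤ (ν (Iic x)).toReal := by
  constructor
  · intro h
    exact S_upper h (quantile_mem hu hne)
  · intro h
    exact csInf_le (S_bddBelow hu) h

end QBasics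
section QAbs
variable {ν : Measure ℝ} [IsProbabilityMeasure ν] {u t x : ℝ}

lemma abs_map_prob : IsProbabilityMeasure (ν.map (fun x : ℝ => |x|)) :=
  Measure.isProbabilityMeasure_map measurable_abs.aemeasurable

lemma abs_map_Iic_neg (ht : t < 0) : (ν.map (fun x : ℝ => |x|)) (Iic t) = 0 := by
  rw [Measure.map_apply measurable_abs measurableSet_Iic]
  convert measure_empty (μ := ν)
  apply eq_empty_iff_forall_notMem.2
  intro y hy
  simp only [mem_preimage, mem_Iic] at hy
  linarith [abs_nonneg y]

lemma abs_map_Iic (hsupp : ν (Iic 0) = 1) (ht : 0 ≤ t) :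
    (ν.map (fun x : ℝ => |x|)) (Iic t) = 1 - ν (Iio (-t)) := by
  rw [Measure.map_apply measurable_abs measurableSet_Iic]
  have hpre : (fun x : ℝ => |x|) ⁻¹' (Iic t) = Icc (-t) t := by
    ext y; simp [abs_le]
  rw [hpre]
  have hIic : ν (Iic t) = 1 := by
    refine le_antisymm (prob_le_one) ?_
    rw [← hsupp]
    exact measure_mono (Iic_subset_Iic.2 ht)
  have : Icc (-t) t = Iic t \ Iio (-t) := by
    ext y; simp only [mem_Icc, mem_diff, mem_Iic, mem_Iio, not_lt]; tauto
  have hsub : Iio (-t) ⊆ Iic t := fun y (hy : y < -t) => le_trans (le_of_lt hy) (by linarith)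
  rw [this, measure_diff hsub measurableSet_Iio.nullMeasurableSet (measure_ne_top _ _), hIic]

lemma abs_map_Iic_iff (hsupp : ν (Iic 0) = 1) (ht : 0 ≤ t)  :
    1 - u ≤ ((ν.map (fun x : ℝ => |x|)) (Iic t)).toReal ↔ (ν (Iio (-t))).toReal ≤ u := by
  rw [abs_map_Iic hsupp ht]
  have hle : ν (Iio (-t)) ≤ 1 := prob_le_one
  have hne : ν (Iio (-t)) ≠ ⊤ := measure_ne_top _ _
  rw [ENNReal.toReal_sub_of_le hle ENNReal.one_ne_top, ENNReal.toReal_one]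
  constructor <;> intro h <;> linarith

end QAbs

section QMore
variable {ν : Measure ℝ} [IsProbabilityMeasure ν] {u x t : ℝ}

/-- quantile of the abs-pushforward is nonnegative. -/
lemma quantile_abs_nonneg (hu : 0 < u) (hu1 : u < 1) :
    0 ≤ quantile (ν.map (fun x : ℝ => |x|)) u := by
  have : IsProbabilityMeasure (ν.map (fun x : ℝ => |x|)) := abs_map_prob
  apply le_csInf (S_nonempty hu1)
  intro b hb
  by_contra h
  push_neg at h
  have h0 := abs_map_Iic_neg (ν := ν) h
  have hb' : u ≤ ((ν.map (fun x : ℝ => |x|)) (Iic b)).toReal := hb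
  rw [h0] at hb'
  simp only [ENNReal.toReal_zero] at hb'
  linarith

/-- quantile of a measure supported on `Iic 0` is nonpositive. -/
lemma quantile_nonpos (hsupp : ν (Iic 0) = 1) (hu : 0 < u) (hu1 : u ≤ 1) :
    quantile ν u ≤ 0 := by
  apply csInf_le (S_bddBelow hu)
  show u ≤ (ν (Iic 0)).toReal
  rw [hsupp]; simpa using hu1

/-- monotonicity of the abs-quantile on `Iio 1`. -/
lemma quantile_abs_monotoneOn : MonotoneOn (quantile (ν.map (fun x : ℝ => |x|))) (Iio (1:ℝ)) := by
  have : IsProbabilityMeasure (ν.map (fun x : ℝ => |x|)) := abs_map_prob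
  set G := ν.map (fun x : ℝ => |x|) with hG
  intro a ha b hb hab
  rcases le_or_gt b 0 with hb0 | hb0
  · have ha0 : a ≤ 0 := hab.trans hb0
    have hSa : {x : ℝ | a ≤ (G (Iic x)).toReal} = univ :=
      eq_univ_of_forall fun x => ha0.trans ENNReal.toReal_nonneg
    have hSb : {x : ℝ | b ≤ (G (Iic x)).toReal} = univ :=
      eq_univ_of_forall fun x => hb0.trans ENNReal.toReal_nonneg
    unfold quantile
    rw [hSa, hSb]
  · rcases le_or_gt a 0 with ha0 | ha0
    · have hSa : {x : ℝ | a ≤ (G (Iic x)).toReal} = univ :=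
        eq_univ_of_forall fun x => ha0.trans ENNReal.toReal_nonneg
      have h1 : quantile G a = 0 := by
        unfold quantile
        rw [hSa, Real.sInf_of_not_bddBelow not_bddBelow_univ]
      rw [h1]
      exact quantile_abs_nonneg hb0 hb
    · exact csInf_le_csInf (S_bddBelow ha0) (S_nonempty hb)
        (fun x hx => le_trans hab hx)

/-- The key identity at good points. -/
lemma quantile_abs_eq_neg_quantile (hsupp : ν (Iic 0) = 1) (hu0 : 0 < u) (hu1 : u < 1)
    (hgood : u ∉ range (fun ρ : ℚ => (ν (Iic (ρ:ℝ))).toReal)) :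
    quantile (ν.map (fun x : ℝ => |x|)) (1 - u) = -(quantile ν u) := by
  have hGP : IsProbabilityMeasure (ν.map (fun x : ℝ => |x|)) := abs_map_prob
  set G := ν.map (fun x : ℝ => |x|) with hG
  set q := quantile ν u with hq
  have hne : ∃ x : ℝ, u ≤ (ν (Iic x)).toReal := ⟨0, by rw [hsupp]; simpa using hu1.le⟩
  have hq0 : q ≤ 0 := quantile_nonpos hsupp hu0 hu1.le
  set B := {t : ℝ | 1 - u ≤ (G (Iic t)).toReal} with hB
  have hBsub : ∀ s ∈ B, 0 ≤ s := by
    intro s hs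
    by_contra hneg
    push_neg at hneg
    have := abs_map_Iic_neg (ν := ν) hneg
    rw [← hG] at this
    simp only [hB, mem_setOf_eq, this, ENNReal.toReal_zero] at hs
    linarith
  have claim1 : Ioi (-q) ⊆ B := by
    intro s hs
    have hs0 : 0 < s := lt_of_le_of_lt (neg_nonneg.2 hq0) hs
    have hns : -s < q := by linarith [mem_Ioi.1 hs]
    have hlt : (ν (Iic (-s))).toReal < u := by
      by_contra hcon
      push_neg at hcon
      have := (quantile_le_iff hu0 hne).2 hcon
      rw [← hq] at this; linarith
    show 1 - u ≤ (G (Iic s)).toReal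
    rw [hG]
    rw [abs_map_Iic_iff hsupp hs0.le]
    exact le_trans (ENNReal.toReal_mono (measure_ne_top _ _) (measure_mono Iio_subset_Iic_self)) hlt.le
  have claim2 : ∀ s ∈ B, -q ≤ s := by
    intro s hs
    by_contra hcon
    push_neg at hcon
    have hs0 : 0 ≤ s := hBsub s hs
    have hlt : q < -s := by linarith
    have hIio : (ν (Iio (-s))).toReal ≤ u := by
      have := hs
      rw [hB, mem_setOf_eq, hG, abs_map_Iic_iff hsupp hs0] at this
      exact this
    obtain ⟨ρ, hρ1, hρ2⟩ := exists_rat_btwn hlt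
    have hup : u ≤ (ν (Iic (ρ:ℝ))).toReal :=
      (quantile_le_iff hu0 hne).1 (by rw [← hq]; exact hρ1.le)
    have hdn : (ν (Iic (ρ:ℝ))).toReal ≤ u :=
      le_trans (ENNReal.toReal_mono (measure_ne_top _ _)
        (measure_mono (fun y (hy : y ≤ (ρ:ℝ)) => lt_of_le_of_lt hy hρ2))) hIio
    exact hgood ⟨ρ, le_antisymm hdn hup⟩
  have hBne : B.Nonempty := ⟨-q + 1, claim1 (by simp [mem_Ioi])⟩
  have hBbdd : BddBelow B := ⟨-q, claim2⟩
  show sInf B = -q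
  apply le_antisymm
  · refine le_of_forall_pos_le_add fun ε hε => ?_
    exact csInf_le hBbdd (claim1 (by simp [mem_Ioi]; linarith))
  · exact le_csInf hBne claim2

end QMore

section Layer

lemma lintegral_pi_fin_prod {d : ℕ} (f : Fin d → ℝ → ℝ≥0∞) (hf : ∀ i, Measurable (f i)) :
    ∫⁻ t : Fin d → ℝ, ∏ i, f i (t i) ∂(Measure.pi fun _ => (volume : Measure ℝ))
      = ∏ i, ∫⁻ x, f i x := by
  induction d with
  | zero =>
    simp only [Finset.univ_eq_empty, Finset.prod_empty, lintegral_const, one_mul]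
    rw [Measure.pi_univ]
    simp
  | succ n ih =>
    have h := (measurePreserving_piFinSuccAbove (fun _ : Fin (n+1) => (volume : Measure ℝ)) 0).symm
    rw [← h.lintegral_comp_emb (MeasurableEquiv.measurableEmbedding _)]
    simp_rw [MeasurableEquiv.piFinSuccAbove_symm_apply, Fin.insertNthEquiv, Equiv.coe_fn_mk,
      Fin.prod_univ_succ]
    simp only [Fin.insertNth_zero, Fin.zero_succAbove, cast_eq, Fin.cons_zero, Fin.cons_succ]
    have hg : Measurable (fun y : Fin n → ℝ => ∏ j, f j.succ (y j)) :=
      Finset.measurable_prod Finset.univ (fun j _ => (hf j.succ).comp (measurable_pi_apply j))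
    have heq := lintegral_prod_mul (μ := (volume : Measure ℝ))
      (ν := (Measure.pi fun _ : Fin n => (volume : Measure ℝ)))
      (f := f 0) (g := fun y : Fin n → ℝ => ∏ j, f j.succ (y j))
      (hf 0).aemeasurable hg.aemeasurable
    rw [heq, ih (fun j => f j.succ) (fun j => hf j.succ)]

lemma prod_indicator_eq {d : ℕ} (z : Fin d → ℝ) (t : Fin d → ℝ) :
    (∏ i, (Ioo (0:ℝ) (z i)).indicator (fun _ => (1:ℝ≥0∞)) (t i))
      = if ∀ i, t i ∈ Ioo 0 (z i) then 1 else 0 := by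
  by_cases h : ∀ i, t i ∈ Ioo 0 (z i)
  · rw [if_pos h]
    apply Finset.prod_eq_one
    intro i _
    rw [indicator_of_mem (h i)]
  · rw [if_neg h]
    push_neg at h
    obtain ⟨i, hi⟩ := h
    apply Finset.prod_eq_zero (Finset.mem_univ i)
    rw [indicator_of_notMem hi]

lemma tonelli_layer {d : ℕ} {Ω : Type*} [MeasurableSpace Ω] (μ : Measure Ω) [SFinite μ]
    (Z : Fin d → Ω → ℝ) (hZ : ∀ i, Measurable (Z i)) :
    ∫⁻ ω, ∏ i, ENNReal.ofReal (Z i ω) ∂μ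
      = ∫⁻ t : Fin d → ℝ, μ {ω | ∀ i, t i ∈ Ioo 0 (Z i ω)}
          ∂(Measure.pi fun _ => (volume : Measure ℝ)) := by
  have key : ∀ ω, ∏ i, ENNReal.ofReal (Z i ω)
      = ∫⁻ t : Fin d → ℝ, (if ∀ i, t i ∈ Ioo 0 (Z i ω) then 1 else 0)
          ∂(Measure.pi fun _ => (volume : Measure ℝ)) := by
    intro ω
    have := lintegral_pi_fin_prod (fun i => (Ioo (0:ℝ) (Z i ω)).indicator (fun _ => (1:ℝ≥0∞)))
      (fun i => measurable_const.indicator measurableSet_Ioo)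
    simp_rw [prod_indicator_eq (fun i => Z i ω)] at this
    rw [this]
    apply Finset.prod_congr rfl
    intro i _
    rw [lintegral_indicator measurableSet_Ioo, setLIntegral_one, Real.volume_Ioo, sub_zero]
  simp_rw [key]
  have hmeas : Measurable (Function.uncurry fun (ω : Ω) (t : Fin d → ℝ) =>
      (if ∀ i, t i ∈ Ioo 0 (Z i ω) then (1:ℝ≥0∞) else 0)) := by
    have hset : MeasurableSet {p : Ω × (Fin d → ℝ) | ∀ i, p.2 i ∈ Ioo 0 (Z i p.1)} := by
      have : {p : Ω × (Fin d → ℝ) | ∀ i, p.2 i ∈ Ioo 0 (Z i p.1)}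
          = ⋂ i, {p : Ω × (Fin d → ℝ) | 0 < p.2 i ∧ p.2 i < Z i p.1} := by
        ext p; simp [mem_Ioo]
      rw [this]
      exact MeasurableSet.iInter fun i =>
        ((measurableSet_lt measurable_const ((measurable_pi_apply i).comp measurable_snd)).inter
          (measurableSet_lt ((measurable_pi_apply i).comp measurable_snd)
            ((hZ i).comp measurable_fst)))
    exact Measurable.ite hset measurable_const measurable_const
  rw [lintegral_lintegral_swap hmeas.aemeasurable]
  apply lintegral_congr
  intro t
  have hsett : MeasurableSet {ω | ∀ i, t i ∈ Ioo 0 (Z i ω)} := by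
    have : {ω | ∀ i, t i ∈ Ioo 0 (Z i ω)} = ⋂ i, {ω | 0 < t i ∧ t i < Z i ω} := by
      ext ω; simp [mem_Ioo]
    rw [this]
    exact MeasurableSet.iInter fun i => by
      rcases lt_or_ge 0 (t i) with h | h
      · have : {ω | 0 < t i ∧ t i < Z i ω} = {ω | t i < Z i ω} := by
          ext ω; simp [h]
        rw [this]; exact measurableSet_lt measurable_const (hZ i)
      · have : {ω | 0 < t i ∧ t i < Z i ω} = ∅ := by
          ext ω; simp; intro h'; linarith
        rw [this]; exact MeasurableSet.empty
  have : (fun ω => if ∀ i, t i ∈ Ioo 0 (Z i ω) then (1:ℝ≥0∞) else 0)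
      = ({ω | ∀ i, t i ∈ Ioo 0 (Z i ω)}).indicator (fun _ => 1) := by
    ext ω; rw [indicator_apply]; rfl
  rw [this, lintegral_indicator hsett, setLIntegral_one]

end Layer

section Compare

lemma per_t_compare {d : ℕ} (F : Fin d → Measure ℝ) [hFP : ∀ i, IsProbabilityMeasure (F i)]
    {Ω : Type*} [MeasurableSpace Ω] (μ : Measure Ω) [IsProbabilityMeasure μ]
    (Y : Fin d → Ω → ℝ) (hYm : ∀ i, Measurable (Y i)) (hlaw : ∀ i, μ.map (Y i) = F i)
    (hd0 : 0 < d) (t : Fin d → ℝ) :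
    μ {ω | ∀ i, t i ∈ Ioo 0 (|Y i ω|)} ≤
      (volume.restrict (Icc (0:ℝ) 1))
        {u | ∀ i, t i ∈ Ioo 0 (quantile ((F i).map (fun x : ℝ => |x|)) u)} := by
  classical
  by_cases hpos : ∀ i, 0 < t i
  · set G : Fin d → Measure ℝ := fun i => (F i).map (fun x : ℝ => |x|) with hGdef
    haveI hGP : ∀ i, IsProbabilityMeasure (G i) := fun i => abs_map_prob
    set c : Fin d → ℝ := fun i => ((G i) (Iic (t i))).toReal with hc
    obtain ⟨j, -, hj⟩ := Finset.exists_max_image Finset.univ c ⟨⟨0, hd0⟩, Finset.mem_univ _⟩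
    have hcj0 : 0 ≤ c j := ENNReal.toReal_nonneg
    have step1 : μ {ω | ∀ i, t i ∈ Ioo 0 (|Y i ω|)} ≤ μ {ω | t j < |Y j ω|} := by
      apply measure_mono
      intro ω hω
      exact (mem_Ioo.1 (hω j)).2
    have hmapabs : μ.map (fun ω => |Y j ω|) = G j := by
      show μ.map (fun ω => |Y j ω|) = (F j).map (fun x : ℝ => |x|)
      rw [← hlaw j, Measure.map_map measurable_abs (hYm j)]
      rfl
    have step2 : μ {ω | t j < |Y j ω|} = (G j) (Ioi (t j)) := by
      rw [← hmapabs, Measure.map_apply (hYm j).abs measurableSet_Ioi]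
      rfl
    have step3 : (G j) (Ioi (t j)) = ENNReal.ofReal (1 - c j) := by
      have h1 : Ioi (t j) = (Iic (t j))ᶜ := (compl_Iic).symm
      rw [h1, measure_compl measurableSet_Iic (measure_ne_top _ _), measure_univ]
      conv_lhs => rw [← ENNReal.ofReal_one,
        ← ENNReal.ofReal_toReal (measure_ne_top (G j) (Iic (t j)))]
      rw [← ENNReal.ofReal_sub _ ENNReal.toReal_nonneg]
    have step4 : ENNReal.ofReal (1 - c j) = volume (Ioo (c j) 1) := by
      rw [Real.volume_Ioo]
    have step5 : volume (Ioo (c j) 1) ≤ (volume.restrict (Icc (0:ℝ) 1))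
        {u | ∀ i, t i ∈ Ioo 0 (quantile (G i) u)} := by
      rw [Measure.restrict_apply' measurableSet_Icc]
      apply measure_mono
      intro u hu
      obtain ⟨hu1, hu2⟩ := mem_Ioo.1 hu
      have hu0 : 0 < u := lt_of_le_of_lt hcj0 hu1
      constructor
      · intro i
        rw [mem_Ioo]
        refine ⟨hpos i, ?_⟩
        by_contra hcon
        push_neg at hcon
        haveI := hGP i
        have := (quantile_le_iff (ν := G i) hu0 (S_nonempty hu2)).1 hcon
        have hci : u ≤ c i := this
        exact absurd (lt_of_le_of_lt (hci.trans (hj i (Finset.mem_univ i))) hu1) (lt_irrefl u)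
      · exact ⟨hu0.le, hu2.le⟩
    calc μ {ω | ∀ i, t i ∈ Ioo 0 (|Y i ω|)} ≤ μ {ω | t j < |Y j ω|} := step1
      _ = (G j) (Ioi (t j)) := step2
      _ = ENNReal.ofReal (1 - c j) := step3
      _ = volume (Ioo (c j) 1) := step4
      _ ≤ _ := step5
  · push_neg at hpos
    obtain ⟨i, hi⟩ := hpos
    have : {ω | ∀ i, t i ∈ Ioo 0 (|Y i ω|)} = (∅ : Set Ω) := by
      apply eq_empty_iff_forall_notMem.2
      intro ω hω
      exact absurd (mem_Ioo.1 (hω i)).1 (not_lt.2 hi)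
    rw [this, measure_empty]
    exact zero_le

end Compare

lemma prod_neg_odd {d : ℕ} (hd : Odd d) (a : Fin d → ℝ) :
    ∏ i, (-(a i)) = -∏ i, a i := by
  calc ∏ i, (-(a i)) = ∏ i, ((-1) * a i) := Finset.prod_congr rfl fun i _ => (neg_one_mul _).symm
    _ = ((-1:ℝ)^d) * ∏ i, a i := by
        rw [Finset.prod_mul_distrib, Finset.prod_const, Finset.card_univ, Fintype.card_fin]
    _ = -∏ i, a i := by rw [hd.neg_one_pow, neg_one_mul]

/-- For `d` odd and nonpositive marginals, the comonotonic coupling `X_i = F_i⁻¹(U)`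
attains the infimum of the expected product, which equals `−E(∏ G_i⁻¹(U))` where `G_i`
is the distribution function of `|X_i|`. -/
theorem stmt_13 (d : ℕ) (hd : Odd d) (F : Fin d → Measure ℝ)
    [∀ i, IsProbabilityMeasure (F i)]
    (hnonpos : ∀ i, F i (Iic (0:ℝ)) = 1)
    (hIntC : IntegrableOn (fun u => ∏ i, quantile (F i) u) (Icc (0:ℝ) 1) volume)
    (hIntQ : IntegrableOn
      (fun u => ∏ i, quantile ((F i).map (fun x => |x|)) u) (Icc (0:ℝ) 1) volume) :
    (∫ u in Icc (0:ℝ) 1, ∏ i, quantile (F i) u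
        = -∫ u in Icc (0:ℝ) 1, ∏ i, quantile ((F i).map (fun x => |x|)) u) ∧
    (∀ (Ω : Type*) [MeasurableSpace Ω] (μ : Measure Ω) [IsProbabilityMeasure μ]
        (Y : Fin d → Ω → ℝ), (∀ i, Measurable (Y i)) → (∀ i, μ.map (Y i) = F i) →
        Integrable (fun ω => ∏ i, Y i ω) μ →
        ∫ u in Icc (0:ℝ) 1, ∏ i, quantile (F i) u ≤ ∫ ω, ∏ i, Y i ω ∂μ) := by
  classical
  set r : Fin d → ℝ → ℝ := fun i => quantile ((F i).map (fun x : ℝ => |x|)) with hrdef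
  set q : Fin d → ℝ → ℝ := fun i => quantile (F i) with hqdef
  -- a.e. goodness
  have h1 : ∀ᵐ u ∂(volume.restrict (Icc (0:ℝ) 1)), u ∈ Ioo (0:ℝ) 1 := by
    refine (ae_restrict_iff' measurableSet_Icc).2 ?_
    rw [ae_iff]
    refine measure_mono_null (fun u hu => ?_) (Set.Countable.measure_zero
      ((countable_singleton (1:ℝ)).insert 0) _)
    simp only [mem_setOf_eq, not_forall, Classical.not_imp] at hu
    obtain ⟨⟨h0, h1⟩, h2⟩ := hu
    simp only [mem_Ioo, not_and_or, not_lt] at h2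
    rcases h2 with h2 | h2
    · exact mem_insert_iff.2 (Or.inl (le_antisymm h2 h0))
    · exact mem_insert_iff.2 (Or.inr (mem_singleton_iff.2 (le_antisymm h1 h2)))
  have h2 : ∀ᵐ u ∂(volume.restrict (Icc (0:ℝ) 1)),
      ∀ i, u ∉ range (fun ρ : ℚ => ((F i) (Iic (ρ:ℝ))).toReal) := by
    rw [ae_all_iff]
    intro i
    refine ae_restrict_of_ae ?_
    rw [ae_iff]
    refine measure_mono_null (fun u hu => ?_) (Set.Countable.measure_zero (countable_range (fun ρ : ℚ => ((F i) (Iic (ρ:ℝ))).toReal)) _)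
    simpa using hu
  have haeeq : ∀ᵐ u ∂(volume.restrict (Icc (0:ℝ) 1)),
      ∏ i, q i u = -∏ i, r i (1 - u) := by
    filter_upwards [h1, h2] with u huo hbad
    have hper : ∀ i, q i u = -(r i (1 - u)) := by
      intro i
      have := quantile_abs_eq_neg_quantile (ν := F i) (hnonpos i) huo.1 huo.2 (hbad i)
      simp only [hrdef, hqdef]
      rw [this]; ring
    calc ∏ i, q i u = ∏ i, (-(r i (1 - u))) := Finset.prod_congr rfl fun i _ => hper i
      _ = -∏ i, r i (1 - u) := prod_neg_odd hd _
  -- part 1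
  have hmp : MeasurePreserving (fun u : ℝ => 1 - u)
      (volume.restrict (Icc (0:ℝ) 1)) (volume.restrict (Icc (0:ℝ) 1)) := by
    have hmp0 : MeasurePreserving (fun u : ℝ => 1 - u) volume volume :=
      Measure.measurePreserving_sub_left volume 1
    have hpre : (fun u : ℝ => 1 - u) ⁻¹' (Icc 0 1) = Icc 0 1 := by
      ext u
      simp only [mem_preimage, mem_Icc]
      constructor <;> rintro ⟨ha, hb⟩ <;> constructor <;> linarith
    have := hmp0.restrict_preimage (s := Icc 0 1) measurableSet_Icc
    rwa [hpre] at this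
  have hpart1 : ∫ u in Icc (0:ℝ) 1, ∏ i, q i u
      = -∫ u in Icc (0:ℝ) 1, ∏ i, r i u := by
    rw [integral_congr_ae haeeq, integral_neg]
    congr 1
    exact hmp.integral_comp (Homeomorph.subLeft (1:ℝ)).measurableEmbedding
      (fun v => ∏ i, r i v)
  refine ⟨hpart1, ?_⟩
  -- part 2
  intro Ω _ μ _ Y hYm hlaw hIntY
  have hneg : ∀ i, ∀ᵐ ω ∂μ, Y i ω ≤ 0 := by
    intro i
    rw [ae_iff]
    have hset : {ω | ¬ Y i ω ≤ 0} = Y i ⁻¹' (Ioi 0) := by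
      ext ω; simp [not_le]
    rw [hset, ← Measure.map_apply (hYm i) measurableSet_Ioi, hlaw i]
    have : Ioi (0:ℝ) = (Iic 0)ᶜ := compl_Iic.symm
    rw [this, measure_compl measurableSet_Iic (measure_ne_top _ _), measure_univ, hnonpos i,
      tsub_self]
  have hprodae : ∀ᵐ ω ∂μ, ∏ i, Y i ω = -∏ i, |Y i ω| := by
    filter_upwards [ae_all_iff.2 hneg] with ω hω
    calc ∏ i, Y i ω = ∏ i, (-(|Y i ω|)) := Finset.prod_congr rfl fun i _ => by
          rw [abs_of_nonpos (hω i)]; ring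
      _ = -∏ i, |Y i ω| := prod_neg_odd hd _
  have hIntAbs : Integrable (fun ω => ∏ i, |Y i ω|) μ :=
    hIntY.abs.congr (Filter.Eventually.of_forall fun ω => Finset.abs_prod Finset.univ (fun i => Y i ω))
  rw [hpart1]
  have hYeq : ∫ ω, ∏ i, Y i ω ∂μ = -∫ ω, ∏ i, |Y i ω| ∂μ := by
    rw [integral_congr_ae hprodae, integral_neg]
  rw [hYeq]
  apply neg_le_neg
  -- measurable versions of r
  have hrae : ∀ i, AEMeasurable (r i) (volume.restrict (Icc (0:ℝ) 1)) := by
    intro i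
    have hmono : MonotoneOn (r i) (Ico (0:ℝ) 1) :=
      (quantile_abs_monotoneOn (ν := F i)).mono Ico_subset_Iio_self
    have := aemeasurable_restrict_of_monotoneOn (μ := volume) measurableSet_Ico hmono
    rwa [Measure.restrict_congr_set Ico_ae_eq_Icc] at this
  set r' : Fin d → ℝ → ℝ := fun i => (hrae i).mk _ with hr'def
  have hr'm : ∀ i, Measurable (r' i) := fun i => (hrae i).measurable_mk
  have hr'eq : ∀ i, r i =ᵐ[volume.restrict (Icc (0:ℝ) 1)] r' i := fun i => (hrae i).ae_eq_mk
  have hrnn : ∀ᵐ u ∂(volume.restrict (Icc (0:ℝ) 1)), ∀ i, 0 ≤ r i u := by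
    filter_upwards [h1] with u huo i
    haveI : IsProbabilityMeasure ((F i).map (fun x : ℝ => |x|)) := abs_map_prob
    exact quantile_abs_nonneg huo.1 huo.2
  -- the chain in ℝ≥0∞
  have hchain : ENNReal.ofReal (∫ ω, ∏ i, |Y i ω| ∂μ)
      ≤ ENNReal.ofReal (∫ u in Icc (0:ℝ) 1, ∏ i, r i u) := by
    calc ENNReal.ofReal (∫ ω, ∏ i, |Y i ω| ∂μ)
        = ∫⁻ ω, ENNReal.ofReal (∏ i, |Y i ω|) ∂μ :=
          ofReal_integral_eq_lintegral_ofReal hIntAbs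
            (Filter.Eventually.of_forall fun ω => Finset.prod_nonneg fun i _ => abs_nonneg _)
      _ = ∫⁻ ω, ∏ i, ENNReal.ofReal (|Y i ω|) ∂μ :=
          lintegral_congr fun ω => ENNReal.ofReal_prod_of_nonneg fun i _ => abs_nonneg _
      _ = ∫⁻ t : Fin d → ℝ, μ {ω | ∀ i, t i ∈ Ioo 0 (|Y i ω|)}
            ∂(Measure.pi fun _ => (volume : Measure ℝ)) :=
          tonelli_layer μ (fun i ω => |Y i ω|) (fun i => (hYm i).abs)
      _ ≤ ∫⁻ t : Fin d → ℝ, (volume.restrict (Icc (0:ℝ) 1))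
            {u | ∀ i, t i ∈ Ioo 0 (r i u)} ∂(Measure.pi fun _ => (volume : Measure ℝ)) :=
          lintegral_mono fun t => per_t_compare F μ Y hYm hlaw hd.pos t
      _ = ∫⁻ t : Fin d → ℝ, (volume.restrict (Icc (0:ℝ) 1))
            {u | ∀ i, t i ∈ Ioo 0 (r' i u)} ∂(Measure.pi fun _ => (volume : Measure ℝ)) := by
          refine lintegral_congr fun t => measure_congr ?_
          have : ∀ᵐ u ∂(volume.restrict (Icc (0:ℝ) 1)), ∀ i, r i u = r' i u :=
            ae_all_iff.2 hr'eq
          rw [Filter.eventuallyEq_set]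
          filter_upwards [this] with u hu
          constructor <;> intro h i
          · rw [← hu i]; exact h i
          · rw [hu i]; exact h i
      _ = ∫⁻ u, ∏ i, ENNReal.ofReal (r' i u) ∂(volume.restrict (Icc (0:ℝ) 1)) :=
          (tonelli_layer (volume.restrict (Icc (0:ℝ) 1)) (fun i u => r' i u) hr'm).symm
      _ = ∫⁻ u, ENNReal.ofReal (∏ i, r i u) ∂(volume.restrict (Icc (0:ℝ) 1)) := by
          refine lintegral_congr_ae ?_
          filter_upwards [ae_all_iff.2 hr'eq, hrnn] with u hu hnn
          have e1 : ∏ i, ENNReal.ofReal (r' i u) = ∏ i, ENNReal.ofReal (r i u) :=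
            Finset.prod_congr rfl fun i _ => by rw [hu i]
          rw [e1, ENNReal.ofReal_prod_of_nonneg fun i _ => hnn i]
      _ = ENNReal.ofReal (∫ u in Icc (0:ℝ) 1, ∏ i, r i u) :=
          (ofReal_integral_eq_lintegral_ofReal hIntQ
            (by filter_upwards [hrnn] with u hnn
                exact Finset.prod_nonneg fun i _ => hnn i)).symm
  have hrint_nn : 0 ≤ ∫ u in Icc (0:ℝ) 1, ∏ i, r i u :=
    integral_nonneg_of_ae (by
      filter_upwards [hrnn] with u hnn
      exact Finset.prod_nonneg fun i _ => hnn i)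
  exact (ENNReal.ofReal_le_ofReal_iff hrint_nn).1 hchain
end

section
/- If (X₁,…,X_d) maximizes E(Y₁⋯Y_d) over all couplings with Y_i ~ F_i, then for every subset I ⊆ {1,…,d}, the random variables ∏_{i∈I} X_i and ∏_{i∉I} X_i are comonotonic. Symmetrically, if (X₁,…,X_d) minimizes the expected product, then for every subset I, ∏_{i∈I} X_i and ∏_{i∉I} X_i are antimonotonic. -/
open MeasureTheory Set
open scoped Classical

/-- Two random variables are comonotonic if both are (a.s.) nondecreasing functions of a
common random variable. -/
def Comonotone2 {Ω : Type*} [MeasurableSpace Ω] (μ : Measure Ω) (Z W : Ω → ℝ) : Prop :=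
  ∃ (T : Ω → ℝ) (f g : ℝ → ℝ), Monotone f ∧ Monotone g ∧
    (∀ᵐ ω ∂μ, Z ω = f (T ω)) ∧ (∀ᵐ ω ∂μ, W ω = g (T ω))

/-- Two random variables are antimonotonic if `Z` and `−W` are comonotonic. -/
def Antimonotone2 {Ω : Type*} [MeasurableSpace Ω] (μ : Measure Ω) (Z W : Ω → ℝ) : Prop :=
  Comonotone2 μ Z (fun ω => -(W ω))

section Transport

universe v u

lemma my_transport {Ω : Type u} [MeasurableSpace Ω] (μ : Measure Ω) [IsProbabilityMeasure μ]
    {d : ℕ} (Y : Fin d → Ω → ℝ) (hY : ∀ i, Measurable (Y i))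
    (hYint : Integrable (fun ω => ∏ i, Y i ω) μ) :
    ∃ (μ' : Measure (ULift.{v} (Fin d → ℝ))) (Y' : Fin d → ULift.{v} (Fin d → ℝ) → ℝ),
      IsProbabilityMeasure μ' ∧ (∀ i, Measurable (Y' i)) ∧
      (∀ i, μ'.map (Y' i) = μ.map (Y i)) ∧
      Integrable (fun v => ∏ i, Y' i v) μ' ∧
      ∫ v, ∏ i, Y' i v ∂μ' = ∫ ω, ∏ i, Y i ω ∂μ := by
  have hΦm : Measurable fun ω => (ULift.up.{v} fun i => Y i ω) :=
    measurable_up.comp (measurable_pi_lambda _ fun i => hY i)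
  refine ⟨μ.map (fun ω => ULift.up.{v} fun i => Y i ω), fun i v => v.down i,
    Measure.isProbabilityMeasure_map hΦm.aemeasurable, fun i => (measurable_pi_apply i).comp
      measurable_down, fun i => ?_, ?_, ?_⟩
  · rw [Measure.map_map (show Measurable fun v : ULift.{v} (Fin d → ℝ) => v.down i from
      (measurable_pi_apply i).comp measurable_down) hΦm]
    rfl
  · have hg : Measurable fun v : ULift.{v} (Fin d → ℝ) => ∏ i, v.down i :=
      Finset.measurable_prod _ fun i _ => (measurable_pi_apply i).comp measurable_down
    rw [integrable_map_measure hg.aestronglyMeasurable hΦm.aemeasurable]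
    exact hYint
  · exact integral_map hΦm.aemeasurable (Finset.measurable_prod _ fun i _ =>
      (measurable_pi_apply i).comp measurable_down).aestronglyMeasurable

end Transport

section Helpers

variable {Ω : Type*} [MeasurableSpace Ω] (μ : Measure Ω)

/-- Pushing forward the product by the symmetric piecewise swap map gives back `μ`. -/
lemma my_map_piecewise [IsProbabilityMeasure μ] {E : Set (Ω × Ω)} (hE : MeasurableSet E)
    (hsymm : Prod.swap ⁻¹' E = E) :
    (μ.prod μ).map (E.piecewise Prod.snd Prod.fst) = μ := by
  have hmeas : Measurable (E.piecewise Prod.snd Prod.fst) :=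
    Measurable.piecewise hE measurable_snd measurable_fst
  ext s hs
  rw [Measure.map_apply hmeas hs, Set.piecewise_preimage, Set.ite]
  have h1 : (μ.prod μ) (Prod.snd ⁻¹' s ∩ E) = (μ.prod μ) (Prod.fst ⁻¹' s ∩ E) := by
    conv_lhs => rw [← Measure.prod_swap (μ := μ) (ν := μ)]
    rw [Measure.map_apply measurable_swap ((measurable_snd hs).inter hE)]
    congr 1
    ext p
    constructor
    · rintro ⟨h1, h2⟩
      exact ⟨by simpa using h1, by rwa [← hsymm] at h2⟩
    · rintro ⟨h1, h2⟩
      exact ⟨by simpa using h1, by rwa [← hsymm]⟩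
  have h2 : (μ.prod μ) (Prod.fst ⁻¹' s) = μ s := by
    rw [← Measure.map_apply measurable_fst hs, Measure.map_fst_prod]
    simp
  rw [measure_union, h1, measure_inter_add_diff _ hE, h2]
  · exact (Disjoint.mono Set.inter_subset_right (fun x hx => hx.2) disjoint_compl_right)
  · exact (measurable_fst hs).diff hE

end Helpers

section Null

variable {α : Type*} [MeasurableSpace α] (μ : Measure α)

lemma my_null_of_neg {E : Set α} (hE : MeasurableSet E) {f : α → ℝ}
    (hf : IntegrableOn f E μ) (hneg : ∀ p ∈ E, f p < 0)
    (hge : 0 ≤ ∫ p in E, f p ∂μ) : μ E = 0 := by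
  by_contra h
  have hpos : 0 < μ E := pos_iff_ne_zero.mpr h
  have hg : IntegrableOn (fun p => -f p) E μ := hf.neg
  have hnn : 0 ≤ᵐ[μ.restrict E] fun p => -f p := by
    filter_upwards [ae_restrict_mem hE] with p hp
    exact le_of_lt (by simpa using hneg p hp)
  have := (setIntegral_pos_iff_support_of_nonneg_ae hnn hg).mpr ?_
  · have h2 : ∫ p in E, (fun p => -f p) p ∂μ = -∫ p in E, f p ∂μ := by
      simp [integral_neg]
    rw [h2] at this
    linarith
  · refine lt_of_lt_of_le hpos (measure_mono ?_)
    intro p hp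
    exact ⟨by simp [Function.mem_support]; exact (hneg p hp).ne, hp⟩

end Null

section Chain

variable {Ω : Type*} [MeasurableSpace Ω] (μ : Measure Ω) [IsProbabilityMeasure μ]

lemma my_comonotone_of_chain {Z W : Ω → ℝ} (hZ : Measurable Z) (hW : Measurable W)
    (hae : ∀ᵐ p ∂(μ.prod μ), 0 ≤ (Z p.1 - Z p.2) * (W p.1 - W p.2)) :
    Comonotone2 μ Z W := by
  classical
  set φ : Ω → ℝ × ℝ := fun ω => (Z ω, W ω) with hφdef
  have hφ : Measurable φ := hZ.prodMk hW
  set ν : Measure (ℝ × ℝ) := μ.map φ with hνdef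
  haveI : IsProbabilityMeasure ν := Measure.isProbabilityMeasure_map hφ.aemeasurable
  -- the bad set is open and null for ν ⊗ ν
  set B : Set ((ℝ × ℝ) × (ℝ × ℝ)) := {q | (q.1.1 - q.2.1) * (q.1.2 - q.2.2) < 0} with hBdef
  have hBopen : IsOpen B := by
    have : Continuous fun q : (ℝ × ℝ) × (ℝ × ℝ) => (q.1.1 - q.2.1) * (q.1.2 - q.2.2) := by
      fun_prop
    exact isOpen_lt this continuous_const
  have hBnull : (ν.prod ν) B = 0 := by
    have hprod : ν.prod ν = (μ.prod μ).map (Prod.map φ φ) :=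
      Measure.map_prod_map μ μ hφ hφ
    rw [hprod, Measure.map_apply (hφ.prodMap hφ) hBopen.measurableSet]
    have : (Prod.map φ φ) ⁻¹' B = {p : Ω × Ω | (Z p.1 - Z p.2) * (W p.1 - W p.2) < 0} := rfl
    rw [this]
    have := hae
    rw [ae_iff] at this
    convert this using 2
    ext p
    simp [not_le]
  -- the support of ν
  set S : Set (ℝ × ℝ) := {a | ∀ U, IsOpen U → a ∈ U → 0 < ν U} with hSdef
  have hSc_open : IsOpen Sᶜ := by
    rw [isOpen_iff_forall_mem_open]
    intro a ha
    simp only [hSdef, Set.mem_compl_iff, Set.mem_setOf_eq, not_forall] at ha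
    obtain ⟨U, hU, haU, hν0⟩ := ha
    refine ⟨U, fun b hb => ?_, hU, haU⟩
    intro hbS
    exact absurd (hbS U hU hb) (by simpa using hν0)
  have hSc_null : ν Sᶜ = 0 := by
    obtain ⟨b, hbc, -, hbasis⟩ := TopologicalSpace.exists_countable_basis (ℝ × ℝ)
    have hcover : Sᶜ ⊆ ⋃₀ {U ∈ b | ν U = 0} := by
      intro a ha
      simp only [hSdef, Set.mem_compl_iff, Set.mem_setOf_eq, not_forall] at ha
      obtain ⟨U, hU, haU, hν0⟩ := ha
      have hν0' : ν U = 0 := by simpa using hν0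
      obtain ⟨V, hVb, haV, hVU⟩ := hbasis.exists_subset_of_mem_open haU hU
      exact ⟨V, ⟨hVb, measure_mono_null hVU hν0'⟩, haV⟩
    refine measure_mono_null hcover ?_
    rw [measure_sUnion_null_iff (hbc.mono (Set.sep_subset _ _))]
    exact fun U hU => hU.2
  -- S is a chain
  have hchain : ∀ a ∈ S, ∀ b ∈ S, 0 ≤ (a.1 - b.1) * (a.2 - b.2) := by
    intro a ha c hc
    by_contra hlt
    push_neg at hlt
    have habB : (a, c) ∈ B := hlt
    obtain ⟨U, V, hU, hV, haU, hcV, hUV⟩ := isOpen_prod_iff.mp hBopen a c habB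
    have : 0 < (ν.prod ν) (U ×ˢ V) := by
      rw [Measure.prod_prod]
      exact ENNReal.mul_pos (ha U hU haU).ne' (hc V hV hcV).ne'
    exact absurd (measure_mono_null hUV hBnull) this.ne'
  -- S is nonempty
  have hSne : S.Nonempty := by
    by_contra h
    rw [Set.not_nonempty_iff_eq_empty] at h
    have : ν Sᶜ = 1 := by rw [h]; simp
    rw [hSc_null] at this
    norm_num at this
  obtain ⟨p₀, hp₀⟩ := hSne
  -- the monotone functions
  set A : ℝ → Set ℝ := fun t =>
    ((fun a : ℝ × ℝ => a.1) '' {a ∈ S | a.1 + a.2 ≤ t}) ∪ {min p₀.1 (t - p₀.2)} with hAdef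
  set A' : ℝ → Set ℝ := fun t =>
    ((fun a : ℝ × ℝ => a.2) '' {a ∈ S | a.1 + a.2 ≤ t}) ∪ {min p₀.2 (t - p₀.1)} with hA'def
  have hAne : ∀ t, (A t).Nonempty := fun t => ⟨_, Set.mem_union_right _ rfl⟩
  have hA'ne : ∀ t, (A' t).Nonempty := fun t => ⟨_, Set.mem_union_right _ rfl⟩
  have hAbdd : ∀ t, BddAbove (A t) := by
    intro t
    refine ⟨max p₀.1 (t - p₀.2), ?_⟩
    rintro x (⟨a, ⟨haS, hat⟩, rfl⟩ | rfl)
    · rcases le_or_gt a.1 p₀.1 with h | h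
      · exact le_max_of_le_left h
      · have h2 := hchain a haS p₀ hp₀
        have : p₀.2 ≤ a.2 := by nlinarith
        exact le_max_of_le_right (by linarith)
    · exact min_le_max
  have hA'bdd : ∀ t, BddAbove (A' t) := by
    intro t
    refine ⟨max p₀.2 (t - p₀.1), ?_⟩
    rintro x (⟨a, ⟨haS, hat⟩, rfl⟩ | rfl)
    · rcases le_or_gt a.2 p₀.2 with h | h
      · exact le_max_of_le_left h
      · have h2 := hchain a haS p₀ hp₀
        have : p₀.1 ≤ a.1 := by nlinarith
        exact le_max_of_le_right (by linarith)
    · exact min_le_max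
  set f : ℝ → ℝ := fun t => sSup (A t) with hfdef
  set g : ℝ → ℝ := fun t => sSup (A' t) with hgdef
  have hfmono : Monotone f := by
    intro s t hst
    refine csSup_le (hAne s) ?_
    rintro x (⟨a, ⟨haS, hat⟩, rfl⟩ | rfl)
    · exact le_csSup (hAbdd t) (Set.mem_union_left _ ⟨a, ⟨haS, hat.trans hst⟩, rfl⟩)
    · exact le_trans (min_le_min le_rfl (by linarith)) (le_csSup (hAbdd t) (Set.mem_union_right _ rfl))
  have hgmono : Monotone g := by
    intro s t hst
    refine csSup_le (hA'ne s) ?_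
    rintro x (⟨a, ⟨haS, hat⟩, rfl⟩ | rfl)
    · exact le_csSup (hA'bdd t) (Set.mem_union_left _ ⟨a, ⟨haS, hat.trans hst⟩, rfl⟩)
    · exact le_trans (min_le_min le_rfl (by linarith)) (le_csSup (hA'bdd t) (Set.mem_union_right _ rfl))
  have hfeval : ∀ a ∈ S, f (a.1 + a.2) = a.1 := by
    intro a haS
    apply le_antisymm
    · refine csSup_le (hAne _) ?_
      rintro x (⟨c, ⟨hcS, hct⟩, rfl⟩ | rfl)
      · by_contra h
        push_neg at h
        have h2 := hchain c hcS a haS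
        have : a.2 ≤ c.2 := by nlinarith
        linarith
      · rcases le_or_gt p₀.1 a.1 with h | h
        · exact le_trans (min_le_left _ _) h
        · have h2 := hchain a haS p₀ hp₀
          have : a.2 ≤ p₀.2 := by nlinarith
          exact le_trans (min_le_right _ _) (by linarith)
    · exact le_csSup (hAbdd _) (Set.mem_union_left _ ⟨a, ⟨haS, le_rfl⟩, rfl⟩)
  have hgeval : ∀ a ∈ S, g (a.1 + a.2) = a.2 := by
    intro a haS
    apply le_antisymm
    · refine csSup_le (hA'ne _) ?_
      rintro x (⟨c, ⟨hcS, hct⟩, rfl⟩ | rfl)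
      · by_contra h
        push_neg at h
        have h2 := hchain c hcS a haS
        have : a.1 ≤ c.1 := by nlinarith
        linarith
      · rcases le_or_gt p₀.2 a.2 with h | h
        · exact le_trans (min_le_left _ _) h
        · have h2 := hchain a haS p₀ hp₀
          have : a.1 ≤ p₀.1 := by nlinarith
          exact le_trans (min_le_right _ _) (by linarith)
    · exact le_csSup (hA'bdd _) (Set.mem_union_left _ ⟨a, ⟨haS, le_rfl⟩, rfl⟩)
  -- a.e. the pair lies in S
  have haeS : ∀ᵐ ω ∂μ, φ ω ∈ S := by
    have : μ (φ ⁻¹' Sᶜ) = 0 := by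
      rw [← Measure.map_apply hφ hSc_open.measurableSet]
      exact hSc_null
    rw [ae_iff]
    convert this using 2
    rfl
  refine ⟨fun ω => Z ω + W ω, f, g, hfmono, hgmono, ?_, ?_⟩
  · filter_upwards [haeS] with ω hω
    exact (hfeval _ hω).symm
  · filter_upwards [haeS] with ω hω
    exact (hgeval _ hω).symm

end Chain

section Coupling

variable {Ω : Type*} [MeasurableSpace Ω] (μ : Measure Ω) [IsProbabilityMeasure μ]
  {d : ℕ} (X : Fin d → Ω → ℝ)

lemma my_intOn_of_bound {α : Type*} [MeasurableSpace α] (m : Measure α) [IsFiniteMeasure m]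
    {E : Set α} (hE : MeasurableSet E) {f : α → ℝ} (hf : Measurable f) {c : ℝ}
    (hb : ∀ p ∈ E, |f p| ≤ c) : IntegrableOn f E m := by
  refine Integrable.mono' (integrable_const c) hf.aestronglyMeasurable ?_
  filter_upwards [ae_restrict_mem hE] with p hp
  exact hb p hp

lemma my_prod_split (I : Finset (Fin d)) (ω : Ω) :
    ∏ i, X i ω = (∏ i ∈ I, X i ω) * (∏ i ∈ Iᶜ, X i ω) :=
  (Finset.prod_mul_prod_compl I _).symm

lemma my_int_fst (hm : ∀ i, Measurable (X i))
    (h : Integrable (fun ω => ∏ i, X i ω) μ) :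
    Integrable (fun p : Ω × Ω => ∏ i, X i p.1) (μ.prod μ) := by
  have h2 : Integrable (fun ω => ∏ i, X i ω) ((μ.prod μ).map Prod.fst) := by
    rw [Measure.map_fst_prod]; simpa using h
  exact h2.comp_measurable measurable_fst

lemma my_integral_fst (hm : ∀ i, Measurable (X i))
    (h : Integrable (fun ω => ∏ i, X i ω) μ) :
    ∫ ω, ∏ i, X i ω ∂μ = ∫ p : Ω × Ω, ∏ i, X i p.1 ∂(μ.prod μ) := by
  have hms : Measurable fun ω => ∏ i, X i ω := Finset.measurable_prod _ fun i _ => hm i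
  have hfst : (μ.prod μ).map Prod.fst = μ := by rw [Measure.map_fst_prod]; simp
  conv_lhs => rw [← hfst]
  rw [integral_map measurable_fst.aemeasurable hms.aestronglyMeasurable]

lemma coupling_main (hm : ∀ i, Measurable (X i))
    (hInt : Integrable (fun ω => ∏ i, X i ω) μ)
    (I : Finset (Fin d)) {E : Set (Ω × Ω)} (hE : MeasurableSet E)
    (hsymm : Prod.swap ⁻¹' E = E) {n : ℝ}
    (hb : ∀ p ∈ E, |∏ i ∈ I, X i p.1| ≤ n ∧ |∏ i ∈ Iᶜ, X i p.2| ≤ n) :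
    ∃ Y : Fin d → Ω × Ω → ℝ, (∀ i, Measurable (Y i)) ∧
      (∀ i, (μ.prod μ).map (Y i) = μ.map (X i)) ∧
      Integrable (fun p => ∏ i, Y i p) (μ.prod μ) ∧
      ∫ p, ∏ i, Y i p ∂(μ.prod μ) =
        (∫ p in E, (∏ i ∈ I, X i p.1) * (∏ i ∈ Iᶜ, X i p.2) ∂(μ.prod μ)) +
        ∫ p in Eᶜ, (∏ i ∈ I, X i p.1) * (∏ i ∈ Iᶜ, X i p.1) ∂(μ.prod μ) := by
  classical
  set ψ : Ω × Ω → Ω := E.piecewise Prod.snd Prod.fst with hψdef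
  have hψm : Measurable ψ := Measurable.piecewise hE measurable_snd measurable_fst
  have hψmap : (μ.prod μ).map ψ = μ := my_map_piecewise μ hE hsymm
  have hkey : ∀ p : Ω × Ω, (∏ i, (if i ∈ I then X i p.1 else X i (ψ p))) =
      (∏ i ∈ I, X i p.1) * (∏ i ∈ Iᶜ, X i (ψ p)) := by
    intro p
    rw [← Finset.prod_mul_prod_compl I]
    congr 1
    · exact Finset.prod_congr rfl fun i hi => by rw [if_pos hi]
    · exact Finset.prod_congr rfl fun i hi => by rw [if_neg (Finset.mem_compl.mp hi)]
  have hIf : Integrable (fun p : Ω × Ω =>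
      ∏ i, (if i ∈ I then X i p.1 else X i (ψ p))) (μ.prod μ) := by
    have h1 : Integrable (fun p : Ω × Ω =>
        E.indicator (fun p => (∏ i ∈ I, X i p.1) * (∏ i ∈ Iᶜ, X i p.2)) p) (μ.prod μ) := by
      have hmeas : Measurable fun p : Ω × Ω =>
          (∏ i ∈ I, X i p.1) * (∏ i ∈ Iᶜ, X i p.2) :=
        ((Finset.measurable_prod _ fun i _ => (hm i).comp measurable_fst)).mul
          ((Finset.measurable_prod _ fun i _ => (hm i).comp measurable_snd))
      refine Integrable.mono' (integrable_const (n * n))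
        (hmeas.indicator hE).aestronglyMeasurable ?_
      refine Filter.Eventually.of_forall fun p => ?_
      by_cases hp : p ∈ E
      · rw [Set.indicator_of_mem hp, Real.norm_eq_abs, abs_mul]
        obtain ⟨hb1, hb2⟩ := hb p hp
        exact mul_le_mul hb1 hb2 (abs_nonneg _) ((abs_nonneg _).trans hb1)
      · rw [Set.indicator_of_notMem hp, norm_zero]
        exact mul_self_nonneg n
    have h2 : Integrable (fun p : Ω × Ω =>
        Eᶜ.indicator (fun p => ∏ i, X i p.1) p) (μ.prod μ) :=
      (my_int_fst μ X hm hInt).indicator hE.compl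
    have heq : (fun p : Ω × Ω => ∏ i, (if i ∈ I then X i p.1 else X i (ψ p))) =
        fun p => E.indicator (fun p => (∏ i ∈ I, X i p.1) * (∏ i ∈ Iᶜ, X i p.2)) p +
          Eᶜ.indicator (fun p => ∏ i, X i p.1) p := by
      funext p
      rw [hkey p]
      by_cases hp : p ∈ E
      · have hψp : ψ p = p.2 := Set.piecewise_eq_of_mem _ _ _ hp
        rw [Set.indicator_of_mem hp, Set.indicator_of_notMem (by simpa using hp),
          hψp, add_zero]
      · have hψp : ψ p = p.1 := Set.piecewise_eq_of_notMem _ _ _ hp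
        rw [Set.indicator_of_notMem hp, Set.indicator_of_mem (by simpa using hp),
          hψp, zero_add, ← my_prod_split]
    rw [heq]
    exact h1.add h2
  refine ⟨fun i p => if i ∈ I then X i p.1 else X i (ψ p), ?_, ?_, ?_, ?_⟩
  · intro i
    by_cases hi : i ∈ I <;> simp only [hi, if_pos, if_neg, if_true, if_false]
    · exact (hm i).comp measurable_fst
    · exact (hm i).comp hψm
  · intro i
    by_cases hi : i ∈ I <;> simp only [hi, if_true, if_false]
    · have : (fun p : Ω × Ω => X i p.1) = X i ∘ Prod.fst := rfl
      rw [this, ← Measure.map_map (hm i) measurable_fst, Measure.map_fst_prod]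
      simp
    · have : (fun p : Ω × Ω => X i (ψ p)) = X i ∘ ψ := rfl
      rw [this, ← Measure.map_map (hm i) hψm, hψmap]
  · exact hIf
  · -- value of the integral
    have hfint : Integrable (fun p : Ω × Ω =>
        ∏ i, (if i ∈ I then X i p.1 else X i (ψ p))) (μ.prod μ) := hIf
    rw [show (fun p => ∏ i, (fun i p => if i ∈ I then X i p.1 else X i (ψ p)) i p) =
        (fun p : Ω × Ω => ∏ i, (if i ∈ I then X i p.1 else X i (ψ p))) from rfl]
    rw [← integral_add_compl hE hfint]
    congr 1
    · refine setIntegral_congr_fun hE fun p hp => ?_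
      have hψp : ψ p = p.2 := Set.piecewise_eq_of_mem _ _ _ hp
      rw [hkey p, hψp]
    · refine setIntegral_congr_fun hE.compl fun p hp => ?_
      have hψp : ψ p = p.1 := Set.piecewise_eq_of_notMem _ _ _ (by simpa using hp)
      rw [hkey p, hψp]

end Coupling

section SwapInt

variable {Ω : Type*} [MeasurableSpace Ω] (μ : Measure Ω) [IsProbabilityMeasure μ]

lemma my_swap_setIntegral {E : Set (Ω × Ω)} (hE : MeasurableSet E)
    (hsymm : Prod.swap ⁻¹' E = E) (F : Ω × Ω → ℝ) :
    ∫ p in E, F p.swap ∂(μ.prod μ) = ∫ p in E, F p ∂(μ.prod μ) := by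
  rw [← integral_indicator hE, ← integral_indicator hE]
  rw [← integral_prod_swap (f := E.indicator F) (μ := μ) (ν := μ)]
  congr 1
  funext p
  by_cases hp : p ∈ E
  · have hps : p.swap ∈ E := by
      rw [← hsymm]; simpa using hp
    rw [Set.indicator_of_mem hp, Set.indicator_of_mem hps]
  · have hps : p.swap ∉ E := by
      rw [← hsymm]; simpa using hp
    rw [Set.indicator_of_notMem hp, Set.indicator_of_notMem hps]

end SwapInt

section AEChain

variable {Ω : Type*} [MeasurableSpace Ω] (μ : Measure Ω) [IsProbabilityMeasure μ]
  {d : ℕ} (X : Fin d → Ω → ℝ)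

lemma my_ae_chain (hm : ∀ i, Measurable (X i))
    (hInt : Integrable (fun ω => ∏ i, X i ω) μ) (I : Finset (Fin d)) (ε : ℝ)
    (hopt : ∀ Y : Fin d → Ω × Ω → ℝ, (∀ i, Measurable (Y i)) →
      (∀ i, (μ.prod μ).map (Y i) = μ.map (X i)) →
      Integrable (fun p => ∏ i, Y i p) (μ.prod μ) →
      ε * ∫ p, ∏ i, Y i p ∂(μ.prod μ) ≤ ε * ∫ ω, ∏ i, X i ω ∂μ) :
    ∀ᵐ p ∂(μ.prod μ), 0 ≤ ε *
      ((∏ i ∈ I, X i p.1 - ∏ i ∈ I, X i p.2) *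
        (∏ i ∈ Iᶜ, X i p.1 - ∏ i ∈ Iᶜ, X i p.2)) := by
  classical
  set Z : Ω → ℝ := fun ω => ∏ i ∈ I, X i ω with hZdef
  set W : Ω → ℝ := fun ω => ∏ i ∈ Iᶜ, X i ω with hWdef
  have hZm : Measurable Z := Finset.measurable_prod _ fun i _ => hm i
  have hWm : Measurable W := Finset.measurable_prod _ fun i _ => hm i
  set q : Ω × Ω → ℝ := fun p => ε * ((Z p.1 - Z p.2) * (W p.1 - W p.2)) with hqdef
  have hqm : Measurable q :=
    (((hZm.comp measurable_fst).sub (hZm.comp measurable_snd)).mul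
      ((hWm.comp measurable_fst).sub (hWm.comp measurable_snd))).const_mul ε
  have hqswap : ∀ p : Ω × Ω, q p.swap = q p := by
    intro p; simp only [hqdef, Prod.fst_swap, Prod.snd_swap]; ring
  -- the exceptional sets
  set E : ℕ → Set (Ω × Ω) := fun n =>
    {p | q p < 0 ∧ (|Z p.1| ≤ n ∧ |Z p.2| ≤ n) ∧ (|W p.1| ≤ n ∧ |W p.2| ≤ n)} with hEdef
  have hEmeas : ∀ n, MeasurableSet (E n) := by
    intro n
    refine (hqm measurableSet_Iio).inter ?_
    exact (((hZm.comp measurable_fst).abs measurableSet_Iic).inter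
        ((hZm.comp measurable_snd).abs measurableSet_Iic)).inter
      (((hWm.comp measurable_fst).abs measurableSet_Iic).inter
        ((hWm.comp measurable_snd).abs measurableSet_Iic))
  have hEsymm : ∀ n, Prod.swap ⁻¹' (E n) = E n := by
    intro n
    ext p
    simp only [hEdef, Set.mem_preimage, Set.mem_setOf_eq, Prod.fst_swap, Prod.snd_swap]
    rw [hqswap p]
    tauto
  -- each E n is null
  have hEnull : ∀ n, (μ.prod μ) (E n) = 0 := by
    intro n
    -- integrability of the four products on E n
    have hbd : ∀ (f g : Ω × Ω → ℝ), Measurable f → Measurable g →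
        (∀ p ∈ E n, |f p| ≤ n) → (∀ p ∈ E n, |g p| ≤ n) →
        IntegrableOn (fun p => f p * g p) (E n) (μ.prod μ) := by
      intro f g hf hg hbf hbg
      refine my_intOn_of_bound (μ.prod μ) (hEmeas n) (hf.mul hg) (c := (n : ℝ) * n) ?_
      intro p hp
      rw [abs_mul]
      exact mul_le_mul (hbf p hp) (hbg p hp) (abs_nonneg _) ((abs_nonneg _).trans (hbf p hp))
    have i11 : IntegrableOn (fun p : Ω × Ω => Z p.1 * W p.1) (E n) (μ.prod μ) :=
      hbd _ _ (hZm.comp measurable_fst) (hWm.comp measurable_fst)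
        (fun p hp => hp.2.1.1) (fun p hp => hp.2.2.1)
    have i12 : IntegrableOn (fun p : Ω × Ω => Z p.1 * W p.2) (E n) (μ.prod μ) :=
      hbd _ _ (hZm.comp measurable_fst) (hWm.comp measurable_snd)
        (fun p hp => hp.2.1.1) (fun p hp => hp.2.2.2)
    have i21 : IntegrableOn (fun p : Ω × Ω => Z p.2 * W p.1) (E n) (μ.prod μ) :=
      hbd _ _ (hZm.comp measurable_snd) (hWm.comp measurable_fst)
        (fun p hp => hp.2.1.2) (fun p hp => hp.2.2.1)
    have i22 : IntegrableOn (fun p : Ω × Ω => Z p.2 * W p.2) (E n) (μ.prod μ) :=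
      hbd _ _ (hZm.comp measurable_snd) (hWm.comp measurable_snd)
        (fun p hp => hp.2.1.2) (fun p hp => hp.2.2.2)
    -- the base integral identity
    have hbase : ∫ ω, ∏ i, X i ω ∂μ =
        (∫ p in E n, Z p.1 * W p.1 ∂(μ.prod μ)) +
          ∫ p in (E n)ᶜ, (∏ i, X i p.1) ∂(μ.prod μ) := by
      rw [my_integral_fst μ X hm hInt,
        ← integral_add_compl (hEmeas n) (my_int_fst μ X hm hInt)]
      congr 1
      refine setIntegral_congr_fun (hEmeas n) fun p _ => ?_
      exact my_prod_split X I p.1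
    -- first coupling (block I)
    have hA : ε * ∫ p in E n, Z p.1 * W p.2 ∂(μ.prod μ) ≤
        ε * ∫ p in E n, Z p.1 * W p.1 ∂(μ.prod μ) := by
      obtain ⟨Y, hY1, hY2, hY3, hY4⟩ := coupling_main μ X hm hInt I (hEmeas n)
        (hEsymm n) (n := (n : ℝ)) (fun p hp => ⟨hp.2.1.1, hp.2.2.2⟩)
      have := hopt Y hY1 hY2 hY3
      rw [hY4, hbase] at this
      have hc : ∫ p in (E n)ᶜ, (∏ i, X i p.1) ∂(μ.prod μ) =
          ∫ p in (E n)ᶜ, Z p.1 * W p.1 ∂(μ.prod μ) := by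
        refine setIntegral_congr_fun (hEmeas n).compl fun p _ => my_prod_split X I p.1
      rw [hc] at this
      rw [mul_add, mul_add] at this
      linarith
    -- second coupling (block Iᶜ)
    have hB : ε * ∫ p in E n, Z p.2 * W p.1 ∂(μ.prod μ) ≤
        ε * ∫ p in E n, Z p.1 * W p.1 ∂(μ.prod μ) := by
      obtain ⟨Y, hY1, hY2, hY3, hY4⟩ := coupling_main μ X hm hInt Iᶜ (hEmeas n)
        (hEsymm n) (n := (n : ℝ)) (fun p hp => ⟨hp.2.2.1, by rw [compl_compl]; exact hp.2.1.2⟩)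
      have := hopt Y hY1 hY2 hY3
      rw [hY4, hbase] at this
      simp only [compl_compl] at this
      have hc : ∫ p in (E n)ᶜ, (∏ i, X i p.1) ∂(μ.prod μ) =
          ∫ p in (E n)ᶜ, (∏ i ∈ Iᶜ, X i p.1) * (∏ i ∈ I, X i p.1) ∂(μ.prod μ) := by
        refine setIntegral_congr_fun (hEmeas n).compl fun p _ => ?_
        rw [mul_comm]
        exact my_prod_split X I p.1
      rw [hc] at this
      have hc2 : ∫ p in E n, (∏ i ∈ Iᶜ, X i p.1) * (∏ i ∈ I, X i p.2) ∂(μ.prod μ) =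
          ∫ p in E n, Z p.2 * W p.1 ∂(μ.prod μ) :=
        setIntegral_congr_fun (hEmeas n) fun p _ => mul_comm _ _
      have hc3 : ∫ p in (E n)ᶜ, (∏ i ∈ Iᶜ, X i p.1) * (∏ i ∈ I, X i p.1) ∂(μ.prod μ) =
          ∫ p in (E n)ᶜ, Z p.1 * W p.1 ∂(μ.prod μ) :=
        setIntegral_congr_fun (hEmeas n).compl fun p _ => mul_comm _ _
      rw [hc2, hc3] at this
      rw [mul_add, mul_add] at this
      linarith
    -- swap identity
    have hC : ∫ p in E n, Z p.2 * W p.2 ∂(μ.prod μ) =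
        ∫ p in E n, Z p.1 * W p.1 ∂(μ.prod μ) := by
      have := my_swap_setIntegral μ (hEmeas n) (hEsymm n)
        (fun p : Ω × Ω => Z p.1 * W p.1)
      simpa using this
    -- combine
    have hsum : ∫ p in E n, q p ∂(μ.prod μ) =
        ε * ((∫ p in E n, Z p.1 * W p.1 ∂(μ.prod μ)) -
          (∫ p in E n, Z p.1 * W p.2 ∂(μ.prod μ)) -
          (∫ p in E n, Z p.2 * W p.1 ∂(μ.prod μ)) +
          ∫ p in E n, Z p.2 * W p.2 ∂(μ.prod μ)) := by
      rw [show (fun p => q p) = fun p : Ω × Ω =>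
          ε * ((Z p.1 - Z p.2) * (W p.1 - W p.2)) from rfl]
      rw [integral_const_mul]
      congr 1
      have j2 : IntegrableOn (fun p : Ω × Ω => Z p.1 * W p.1 - Z p.1 * W p.2)
          (E n) (μ.prod μ) := i11.sub i12
      have j3 : IntegrableOn
          (fun p : Ω × Ω => Z p.1 * W p.1 - Z p.1 * W p.2 - Z p.2 * W p.1)
          (E n) (μ.prod μ) := j2.sub i21
      rw [← integral_sub i11 i12, ← integral_sub j2 i21, ← integral_add j3 i22]
      refine setIntegral_congr_fun (hEmeas n) fun p _ => by ring
    have hge : 0 ≤ ∫ p in E n, q p ∂(μ.prod μ) := by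
      rw [hsum]
      have h1 : ε * (∫ p in E n, Z p.2 * W p.2 ∂(μ.prod μ)) =
          ε * ∫ p in E n, Z p.1 * W p.1 ∂(μ.prod μ) := by rw [hC]
      nlinarith [hA, hB, h1]
    have hqint : IntegrableOn q (E n) (μ.prod μ) := by
      have : IntegrableOn (fun p : Ω × Ω =>
          (Z p.1 * W p.1 - Z p.1 * W p.2 - Z p.2 * W p.1 + Z p.2 * W p.2)) (E n) (μ.prod μ) :=
        (((i11.sub i12).sub i21).add i22)
      have h2 := this.const_mul ε
      exact h2.congr (Filter.Eventually.of_forall fun p => by simp only [hqdef]; ring)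
    exact my_null_of_neg (μ.prod μ) (hEmeas n) hqint (fun p hp => hp.1) hge
  -- conclude
  have hbig : (μ.prod μ) {p : Ω × Ω | q p < 0} = 0 := by
    refine measure_mono_null (fun p hp => ?_) (measure_iUnion_null hEnull)
    have hp' : q p < 0 := hp
    set M : ℝ := max (max |Z p.1| |Z p.2|) (max |W p.1| |W p.2|) with hM
    obtain ⟨n, hn⟩ := exists_nat_ge M
    refine Set.mem_iUnion.mpr ⟨n, hp', ⟨?_, ?_⟩, ⟨?_, ?_⟩⟩
    · exact le_trans (le_trans (le_max_left _ _) (le_max_left _ _)) hn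
    · exact le_trans (le_trans (le_max_right _ _) (le_max_left _ _)) hn
    · exact le_trans (le_trans (le_max_left _ _) (le_max_right _ _)) hn
    · exact le_trans (le_trans (le_max_right _ _) (le_max_right _ _)) hn
  rw [ae_iff]
  convert hbig using 2
  ext p
  simp only [Set.mem_setOf_eq, not_le, hqdef]
  exact Iff.rfl

end AEChain

/-- If `(X₁,…,X_d)` maximizes (resp. minimizes) the expected product over all couplings with
the same marginals, then for every subset `I` the partial products `∏_{i∈I} X_i` and
`∏_{i∉I} X_i` are comonotonic (resp. antimonotonic). -/
theorem stmt_15 {Ω : Type*} [MeasurableSpace Ω] (μ : Measure Ω) [IsProbabilityMeasure μ]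
    (d : ℕ) (X : Fin d → Ω → ℝ) (hm : ∀ i, Measurable (X i))
    (hL2 : ∀ i, MemLp (X i) 2 μ)
    (hInt : Integrable (fun ω => ∏ i, X i ω) μ) :
    ((∀ (Ω' : Type*) [MeasurableSpace Ω'] (μ' : Measure Ω') [IsProbabilityMeasure μ']
        (Y : Fin d → Ω' → ℝ), (∀ i, Measurable (Y i)) →
        (∀ i, μ'.map (Y i) = μ.map (X i)) →
        Integrable (fun ω => ∏ i, Y i ω) μ' →
        ∫ ω, ∏ i, Y i ω ∂μ' ≤ ∫ ω, ∏ i, X i ω ∂μ) →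
      ∀ I : Finset (Fin d),
        Comonotone2 μ (fun ω => ∏ i ∈ I, X i ω) (fun ω => ∏ i ∈ Iᶜ, X i ω)) ∧
    ((∀ (Ω' : Type*) [MeasurableSpace Ω'] (μ' : Measure Ω') [IsProbabilityMeasure μ']
        (Y : Fin d → Ω' → ℝ), (∀ i, Measurable (Y i)) →
        (∀ i, μ'.map (Y i) = μ.map (X i)) →
        Integrable (fun ω => ∏ i, Y i ω) μ' →
        ∫ ω, ∏ i, X i ω ∂μ ≤ ∫ ω, ∏ i, Y i ω ∂μ') →
      ∀ I : Finset (Fin d),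
        Antimonotone2 μ (fun ω => ∏ i ∈ I, X i ω) (fun ω => ∏ i ∈ Iᶜ, X i ω)) := by
  constructor
  · intro h I
    have hZm : Measurable fun ω => ∏ i ∈ I, X i ω :=
      Finset.measurable_prod _ fun i _ => hm i
    have hWm : Measurable fun ω => ∏ i ∈ Iᶜ, X i ω :=
      Finset.measurable_prod _ fun i _ => hm i
    refine my_comonotone_of_chain μ hZm hWm ?_
    have hae := my_ae_chain μ X hm hInt I 1 ?_
    · filter_upwards [hae] with p hp
      simpa using hp
    · intro Y hY1 hY2 hY3
      obtain ⟨μ', Y', hP, h1, h2, h3, h4⟩ := my_transport (μ.prod μ) Y hY1 hY3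
      haveI := hP
      have h5 := h _ μ' Y' h1 (fun i => by rw [h2 i, hY2 i]) h3
      rw [h4] at h5
      simpa using h5
  · intro h I
    have hZm : Measurable fun ω => ∏ i ∈ I, X i ω :=
      Finset.measurable_prod _ fun i _ => hm i
    have hWm : Measurable fun ω => -(∏ i ∈ Iᶜ, X i ω) :=
      (Finset.measurable_prod _ fun i _ => hm i).neg
    show Comonotone2 μ (fun ω => ∏ i ∈ I, X i ω) (fun ω => -(∏ i ∈ Iᶜ, X i ω))
    refine my_comonotone_of_chain μ hZm hWm ?_
    have hae := my_ae_chain μ X hm hInt I (-1) ?_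
    · filter_upwards [hae] with p hp
      refine le_trans hp (le_of_eq ?_)
      ring
    · intro Y hY1 hY2 hY3
      obtain ⟨μ', Y', hP, h1, h2, h3, h4⟩ := my_transport (μ.prod μ) Y hY1 hY3
      haveI := hP
      have h5 := h _ μ' Y' h1 (fun i => by rw [h2 i, hY2 i]) h3
      rw [h4] at h5
      linarith
end

section
/- Define the standardized rank coskewness of X₁, X₂, X₃ with strictly increasing continuous distribution functions F₁, F₂, F₃ by RS(X₁,X₂,X₃) = 32·E((F₁(X₁)−1/2)(F₂(X₂)−1/2)(F₃(X₃)−1/2)). Then −1 ≤ RS(X₁,X₂,X₃) ≤ 1, RS is invariant under strictly increasing transformations of the coordinates (RS(f₁(X₁),f₂(X₂),f₃(X₃)) = RS(X₁,X₂,X₃) for strictly increasing f_i), and RS(X₁,X₂,X₃) = 0 when X₁, X₂, X₃ are independent. -/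
open MeasureTheory Set ProbabilityTheory Filter Topology

lemma rs_int_id : ∫ x in Icc (0:ℝ) 1, x = 1/2 := by
  rw [integral_Icc_eq_integral_Ioc, ← intervalIntegral.integral_of_le (by norm_num : (0:ℝ) ≤ 1)]
  simp

lemma rs_int_abs3 : ∫ x in Icc (0:ℝ) 1, |x - 1/2|^3 = 1/32 := by
  rw [integral_Icc_eq_integral_Ioc, ← intervalIntegral.integral_of_le (by norm_num : (0:ℝ) ≤ 1)]
  have hc : Continuous fun x : ℝ => |x - 1/2|^3 := by continuity
  have hsplit := intervalIntegral.integral_add_adjacent_intervals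
    (μ := volume) (a := (0:ℝ)) (b := 1/2) (c := 1)
    (hc.intervalIntegrable _ _) (hc.intervalIntegrable _ _)
  rw [← hsplit]
  have h1 : ∫ x in (0:ℝ)..(1/2), |x - 1/2|^3 = ∫ x in (0:ℝ)..(1/2), (1/2 - x)^3 := by
    apply intervalIntegral.integral_congr
    intro x hx
    rw [Set.uIcc_of_le (by norm_num : (0:ℝ) ≤ 1/2)] at hx
    simp only []
    rw [abs_of_nonpos (by linarith [hx.2] : x - 1/2 ≤ 0)]
    ring
  have h2 : ∫ x in (1/2:ℝ)..1, |x - 1/2|^3 = ∫ x in (1/2:ℝ)..1, (x - 1/2)^3 := by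
    apply intervalIntegral.integral_congr
    intro x hx
    rw [Set.uIcc_of_le (by norm_num : (1/2:ℝ) ≤ 1)] at hx
    simp only []
    rw [abs_of_nonneg (by linarith [hx.1] : (0:ℝ) ≤ x - 1/2)]
  rw [h1, h2]
  have e1 : ∫ x in (0:ℝ)..(1/2), (1/2 - x)^3
      = ∫ x in (1/2 - 1/2 : ℝ)..(1/2 - 0 : ℝ), x^3 := by
    rw [intervalIntegral.integral_comp_sub_left (fun x => x^3) (1/2)]
  have e2 : ∫ x in (1/2:ℝ)..1, (x - 1/2)^3
      = ∫ x in (1/2 - 1/2 : ℝ)..(1 - 1/2 : ℝ), x^3 := by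
    rw [intervalIntegral.integral_comp_sub_right (fun x => x^3) (1/2)]
  rw [e1, e2]
  norm_num [integral_pow]

lemma rs_amgm (a b c : ℝ) (ha : 0 ≤ a) (hb : 0 ≤ b) (hc : 0 ≤ c) :
    a * b * c ≤ (a^3 + b^3 + c^3) / 3 := by
  nlinarith [sq_nonneg (a-b), sq_nonneg (b-c), sq_nonneg (a-c),
    mul_nonneg (add_nonneg (add_nonneg ha hb) hc)
      (by nlinarith [sq_nonneg (a-b), sq_nonneg (b-c), sq_nonneg (a-c)] :
        (0:ℝ) ≤ a^2 + b^2 + c^2 - a*b - b*c - a*c)]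

lemma rs_map_uniform {Ω : Type*} [MeasurableSpace Ω] (μ : Measure Ω) [IsProbabilityMeasure μ]
    (X : Ω → ℝ) (F : ℝ → ℝ) (hm : Measurable X)
    (hcdf : ∀ x, F x = ((μ.map X) (Iic x)).toReal)
    (hcont : Continuous F) (hmono : StrictMono F) :
    μ.map (fun ω => F (X ω)) = volume.restrict (Icc (0:ℝ) 1) := by
  haveI hprob : IsProbabilityMeasure (μ.map X) := Measure.isProbabilityMeasure_map hm.aemeasurable
  have hF0 : ∀ x, 0 ≤ F x := fun x => by rw [hcdf]; exact ENNReal.toReal_nonneg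
  have hF1 : ∀ x, F x ≤ 1 := fun x => by
    rw [hcdf]
    have h := prob_le_one (μ := μ.map X) (s := Iic x)
    simpa using ENNReal.toReal_mono (by simp) h
  have hFpos : ∀ x, 0 < F x := fun x => lt_of_le_of_lt (hF0 (x-1)) (hmono (by linarith))
  have hFeq : F = fun x => cdf (μ.map X) x := funext fun x => by rw [hcdf, cdf_eq_real, measureReal_def]
  have htop : Tendsto F atTop (𝓝 1) := by rw [hFeq]; exact tendsto_cdf_atTop _
  have hbot : Tendsto F atBot (𝓝 0) := by rw [hFeq]; exact tendsto_cdf_atBot _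
  have hsurj : ∀ t : ℝ, 0 < t → t < 1 → ∃ s, F s = t := by
    intro t ht0 ht1
    obtain ⟨a, ha⟩ : ∃ a, F a < t := (hbot.eventually (gt_mem_nhds ht0)).exists
    obtain ⟨b, hb⟩ : ∃ b, t < F b := (htop.eventually (lt_mem_nhds ht1)).exists
    have hab : a ≤ b := (hmono.lt_iff_lt.mp (ha.trans hb)).le
    obtain ⟨s, _, hs⟩ := intermediate_value_Icc hab hcont.continuousOn ⟨ha.le, hb.le⟩
    exact ⟨s, hs⟩
  have hmc : Measurable fun ω => F (X ω) := hcont.measurable.comp hm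
  refine Measure.ext_of_Iic _ _ (fun t => ?_)
  rw [Measure.map_apply hmc measurableSet_Iic,
    Measure.restrict_apply measurableSet_Iic]
  rcases lt_or_ge t 0 with ht | ht
  · have h1 : (fun ω => F (X ω)) ⁻¹' Iic t = ∅ := by
      ext ω; simp only [mem_preimage, mem_Iic, mem_empty_iff_false, iff_false, not_le]
      exact ht.trans (hFpos _)
    have h2 : Iic t ∩ Icc (0:ℝ) 1 = ∅ := by
      ext x; simp only [mem_inter_iff, mem_Iic, mem_Icc, mem_empty_iff_false, iff_false]
      rintro ⟨h1', h2', _⟩; linarith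
    rw [h1, h2]; simp
  · rcases lt_or_ge t 1 with ht1 | ht1
    · rcases eq_or_lt_of_le ht with ht0 | ht0
      · have h1 : (fun ω => F (X ω)) ⁻¹' Iic t = ∅ := by
          ext ω; simp only [mem_preimage, mem_Iic, mem_empty_iff_false, iff_false, not_le, ← ht0]
          exact hFpos _
        have h2 : Iic t ∩ Icc (0:ℝ) 1 = {0} := by
          ext x; simp only [mem_inter_iff, mem_Iic, mem_Icc, mem_singleton_iff, ← ht0]
          constructor
          · rintro ⟨h1', h2', _⟩; linarith
          · rintro rfl; norm_num
        rw [h1, h2]; simp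
      · obtain ⟨s, hs⟩ := hsurj t ht0 ht1
        have h1 : (fun ω => F (X ω)) ⁻¹' Iic t = X ⁻¹' Iic s := by
          ext ω; simp only [mem_preimage, mem_Iic, ← hs, hmono.le_iff_le]
        have h2 : Iic t ∩ Icc (0:ℝ) 1 = Icc 0 t := by
          ext x; simp only [mem_inter_iff, mem_Iic, mem_Icc]
          constructor
          · rintro ⟨h1', h2', _⟩; exact ⟨h2', h1'⟩
          · rintro ⟨h1', h2'⟩; exact ⟨h2', h1', by linarith⟩
        rw [h1, h2, ← Measure.map_apply hm measurableSet_Iic, Real.volume_Icc]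
        rw [← ENNReal.ofReal_toReal (measure_ne_top (μ.map X) (Iic s)), ← hcdf, hs]
        norm_num
    · have h1 : (fun ω => F (X ω)) ⁻¹' Iic t = univ := by
        ext ω; simp only [mem_preimage, mem_Iic, mem_univ, iff_true]
        exact (hF1 _).trans ht1
      have h2 : Iic t ∩ Icc (0:ℝ) 1 = Icc 0 1 := by
        rw [inter_eq_right]; intro x hx; exact hx.2.trans ht1
      rw [h1, h2, Real.volume_Icc]; simp

lemma rs_integral_comp {Ω : Type*} [MeasurableSpace Ω] (μ : Measure Ω) [IsProbabilityMeasure μ]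
    (X : Ω → ℝ) (F : ℝ → ℝ) (hm : Measurable X)
    (hcdf : ∀ x, F x = ((μ.map X) (Iic x)).toReal)
    (hcont : Continuous F) (hmono : StrictMono F)
    (g : ℝ → ℝ) (hg : Continuous g) :
    ∫ ω, g (F (X ω)) ∂μ = ∫ x in Icc (0:ℝ) 1, g x := by
  have hmc : Measurable fun ω => F (X ω) := hcont.measurable.comp hm
  rw [← rs_map_uniform μ X F hm hcdf hcont hmono,
    integral_map hmc.aemeasurable hg.aestronglyMeasurable]

/-- Properties of the standardized rank coskewness
`RS(X₁,X₂,X₃) = 32 E((F₁(X₁)−1/2)(F₂(X₂)−1/2)(F₃(X₃)−1/2))`: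
it lies in `[−1,1]`, is invariant under strictly increasing transformations of the
coordinates, and vanishes when `X₁, X₂, X₃` are independent. -/
theorem stmt_18 {Ω : Type*} [MeasurableSpace Ω] (μ : Measure Ω) [IsProbabilityMeasure μ]
    (X : Fin 3 → Ω → ℝ) (F : Fin 3 → ℝ → ℝ)
    (hm : ∀ i, Measurable (X i))
    (hcdf : ∀ i x, F i x = ((μ.map (X i)) (Iic x)).toReal)
    (hcont : ∀ i, Continuous (F i)) (hmono : ∀ i, StrictMono (F i)) :
    (-1 ≤ 32 * ∫ ω, ∏ i, (F i (X i ω) - 1/2) ∂μ ∧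
      32 * ∫ ω, ∏ i, (F i (X i ω) - 1/2) ∂μ ≤ 1) ∧
    (∀ (f G : Fin 3 → ℝ → ℝ), (∀ i, StrictMono (f i)) →
        (∀ i x, G i x = ((μ.map (fun ω => f i (X i ω))) (Iic x)).toReal) →
        32 * ∫ ω, ∏ i, (G i (f i (X i ω)) - 1/2) ∂μ
          = 32 * ∫ ω, ∏ i, (F i (X i ω) - 1/2) ∂μ) ∧
    (iIndepFun X μ →
        32 * ∫ ω, ∏ i, (F i (X i ω) - 1/2) ∂μ = 0) := by
  -- notation
  set Y : Fin 3 → Ω → ℝ := fun i ω => F i (X i ω) - 1/2 with hYdef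
  have hYmeas : ∀ i, Measurable (Y i) :=
    fun i => ((hcont i).measurable.comp (hm i)).sub measurable_const
  -- bounds on F
  have hF0 : ∀ i x, 0 ≤ F i x := fun i x => by rw [hcdf]; exact ENNReal.toReal_nonneg
  have hF1 : ∀ i x, F i x ≤ 1 := fun i x => by
    rw [hcdf]
    have h := prob_le_one (μ := μ.map (X i)) (s := Iic x)
    haveI : IsProbabilityMeasure (μ.map (X i)) := Measure.isProbabilityMeasure_map (hm i).aemeasurable
    simpa using ENNReal.toReal_mono (by simp) h
  have hYbd : ∀ i ω, |Y i ω| ≤ 1/2 := fun i ω => by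
    simp only [hYdef]
    rw [abs_le]
    constructor <;> [linarith [hF0 i (X i ω)]; linarith [hF1 i (X i ω)]]
  -- integrability
  have hint : ∀ (v : Ω → ℝ), Measurable v → (∀ ω, |v ω| ≤ 1) → Integrable v μ := by
    intro v hv hb
    exact ⟨hv.aestronglyMeasurable, HasFiniteIntegral.of_bounded (C := 1) (ae_of_all _ hb)⟩
  have hprod_eq : ∀ ω, ∏ i, Y i ω = Y 0 ω * Y 1 ω * Y 2 ω := fun ω => by
    rw [Fin.prod_univ_three]
  have hint_prod : Integrable (fun ω => ∏ i, Y i ω) μ := by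
    refine hint _ (by measurability) (fun ω => ?_)
    rw [hprod_eq, abs_mul, abs_mul]
    have h0 := hYbd 0 ω; have h1 := hYbd 1 ω; have h2 := hYbd 2 ω
    have p0 := abs_nonneg (Y 0 ω); have p1 := abs_nonneg (Y 1 ω); have p2 := abs_nonneg (Y 2 ω)
    have q1 : |Y 0 ω| * |Y 1 ω| ≤ (1/2) * (1/2) :=
      mul_le_mul h0 h1 p1 (by norm_num)
    have q2 : |Y 0 ω| * |Y 1 ω| * |Y 2 ω| ≤ ((1/2) * (1/2)) * (1/2) :=
      mul_le_mul q1 h2 p2 (by norm_num)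
    linarith
  have hint_cube : ∀ i, Integrable (fun ω => |Y i ω|^3) μ := by
    intro i
    refine hint _ (by measurability) (fun ω => ?_)
    have h := hYbd i ω; have p := abs_nonneg (Y i ω)
    rw [abs_of_nonneg (by positivity)]
    exact pow_le_one₀ p (h.trans (by norm_num))
  -- key integral values
  have hcube : ∀ i, ∫ ω, |Y i ω|^3 ∂μ = 1/32 := by
    intro i
    have := rs_integral_comp μ (X i) (F i) (hm i) (hcdf i) (hcont i) (hmono i)
      (fun x => |x - 1/2|^3) (by continuity)
    rw [hYdef]; simp only []
    rw [this, rs_int_abs3]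
  have hmean : ∀ i, ∫ ω, Y i ω ∂μ = 0 := by
    intro i
    have h1 : Integrable (fun ω => F i (X i ω)) μ := by
      refine hint _ ((hcont i).measurable.comp (hm i)) (fun ω => ?_)
      rw [abs_of_nonneg (hF0 i _)]; exact hF1 i _
    have h2 := rs_integral_comp μ (X i) (F i) (hm i) (hcdf i) (hcont i) (hmono i)
      (fun x => x) continuous_id
    rw [hYdef]; simp only []
    rw [integral_sub h1 (integrable_const _), h2, rs_int_id, integral_const]
    simp
  refine ⟨?_, ?_, ?_⟩
  · -- bounds
    have hptw : ∀ ω, |∏ i, Y i ω| ≤ (|Y 0 ω|^3 + |Y 1 ω|^3 + |Y 2 ω|^3)/3 := by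
      intro ω
      rw [hprod_eq, abs_mul, abs_mul]
      exact rs_amgm _ _ _ (abs_nonneg _) (abs_nonneg _) (abs_nonneg _)
    have hintsum : Integrable (fun ω => (|Y 0 ω|^3 + |Y 1 ω|^3 + |Y 2 ω|^3)/3) μ :=
      (((hint_cube 0).add (hint_cube 1)).add (hint_cube 2)).div_const 3
    have hn := norm_integral_le_integral_norm (μ := μ) (fun ω => ∏ i, Y i ω)
    simp only [Real.norm_eq_abs] at hn
    have hadd01 : Integrable (fun ω => |Y 0 ω|^3 + |Y 1 ω|^3) μ :=
      (hint_cube 0).add (hint_cube 1)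
    have habs : |∫ ω, ∏ i, Y i ω ∂μ| ≤ 1/32 := by
      calc |∫ ω, ∏ i, Y i ω ∂μ| ≤ ∫ ω, |∏ i, Y i ω| ∂μ := hn
        _ ≤ ∫ ω, (|Y 0 ω|^3 + |Y 1 ω|^3 + |Y 2 ω|^3)/3 ∂μ :=
          integral_mono hint_prod.abs hintsum hptw
        _ = 1/32 := by
          rw [integral_div, integral_add hadd01 (hint_cube 2),
            integral_add (hint_cube 0) (hint_cube 1), hcube 0, hcube 1, hcube 2]
          norm_num
    rw [abs_le] at habs
    constructor <;> linarith [habs.1, habs.2]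
  · -- invariance
    intro f G hf hG
    congr 1
    apply integral_congr_ae
    filter_upwards with ω
    apply Finset.prod_congr rfl
    intro i _
    have : G i (f i (X i ω)) = F i (X i ω) := by
      rw [hG i, hcdf i]
      congr 1
      have hfm : Measurable (f i) := (hf i).monotone.measurable
      have hfc : Measurable fun ω => f i (X i ω) := hfm.comp (hm i)
      rw [Measure.map_apply hfc measurableSet_Iic,
        Measure.map_apply (hm i) measurableSet_Iic]
      congr 1
      ext ω'
      simp only [mem_preimage, mem_Iic, Function.comp]
      exact (hf i).le_iff_le
    rw [this]
  · -- independence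
    intro hind
    have hYindep : iIndepFun Y μ := by
      have := hind.comp (fun i x => F i x - 1/2)
        (fun i => (hcont i).measurable.sub measurable_const)
      exact this
    have hpair : IndepFun (∏ j ∈ ({1, 2} : Finset (Fin 3)), Y j) (Y 0) μ :=
      hYindep.indepFun_finset_prod_of_notMem hYmeas (by decide)
    have h12 : (∏ j ∈ ({1, 2} : Finset (Fin 3)), Y j) = fun ω => Y 1 ω * Y 2 ω := by
      funext ω
      rw [Finset.prod_apply, Finset.prod_pair (by decide : (1 : Fin 3) ≠ 2)]
    rw [h12] at hpair
    have hmul := hpair.integral_mul_eq_mul_integral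
      ((hYmeas 1).mul (hYmeas 2)).aestronglyMeasurable
      (hYmeas 0).aestronglyMeasurable
    have heq : (fun ω => ∏ i, Y i ω)
        = (fun ω => Y 1 ω * Y 2 ω) * Y 0 := by
      funext ω
      simp only [Pi.mul_apply]
      rw [hprod_eq]; ring
    rw [show (∫ ω, ∏ i, (F i (X i ω) - 1/2) ∂μ) = ∫ ω, ∏ i, Y i ω ∂μ from rfl, heq]
    rw [show ∫ ω, ((fun ω => Y 1 ω * Y 2 ω) * Y 0) ω ∂μ
        = ∫ ω, Y 1 ω * Y 2 ω * Y 0 ω ∂μ from rfl] at hmul ⊢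
    rw [hmul, hmean 0]
    ring
end

section
/- Let U, V, W be random variables each uniform on [0,1] (arbitrarily dependent). Then E((U−1/2)(V−1/2)(W−1/2)) ≤ 1/32, and the bound is attained; consequently the maximum coskewness of three Uniform[0,1] variables is 3√3/4. -/
open MeasureTheory Set ENNReal

/-- The uniform distribution on `[0,1]`. -/
noncomputable def unif01 : Measure ℝ := volume.restrict (Icc (0:ℝ) 1)

lemma amgm3 (a b c : ℝ) (ha : 0 ≤ a) (hb : 0 ≤ b) (hc : 0 ≤ c) :
    a * b * c ≤ (a ^ 3 + b ^ 3 + c ^ 3) / 3 := by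
  nlinarith [sq_nonneg (a - b), sq_nonneg (b - c), sq_nonneg (a - c), sq_nonneg (a + b + c),
    mul_nonneg ha hb, mul_nonneg hb hc, mul_nonneg ha hc]

lemma abs_cube_int : ∫ x, |x - 1/2| ^ 3 ∂unif01 = 1/32 := by
  rw [unif01, integral_Icc_eq_integral_Ioc,
    ← intervalIntegral.integral_of_le (by norm_num : (0:ℝ) ≤ 1)]
  have hc : Continuous fun x : ℝ => |x - 1/2| ^ 3 := by continuity
  rw [← intervalIntegral.integral_add_adjacent_intervals
    (hc.intervalIntegrable 0 (1/2)) (hc.intervalIntegrable (1/2) 1)]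
  have e1 : ∫ x in (0:ℝ)..(1/2), |x - 1/2| ^ 3 = ∫ x in (0:ℝ)..(1/2), (1/2 - x) ^ 3 := by
    apply intervalIntegral.integral_congr
    intro x hx
    rw [uIcc_of_le (by norm_num)] at hx
    obtain ⟨hx1, hx2⟩ := hx
    show |x - 1/2| ^ 3 = (1/2 - x) ^ 3
    rw [abs_of_nonpos (by linarith)]
    ring
  have e2 : ∫ x in (1/2:ℝ)..1, |x - 1/2| ^ 3 = ∫ x in (1/2:ℝ)..1, (x - 1/2) ^ 3 := by
    apply intervalIntegral.integral_congr
    intro x hx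
    rw [uIcc_of_le (by norm_num)] at hx
    obtain ⟨hx1, hx2⟩ := hx
    show |x - 1/2| ^ 3 = (x - 1/2) ^ 3
    rw [abs_of_nonneg (by linarith)]
  rw [e1, e2]
  have c1 := intervalIntegral.integral_comp_sub_left (a := (0:ℝ)) (b := 1/2)
    (fun x : ℝ => x ^ 3) (1/2)
  have c2 := intervalIntegral.integral_comp_sub_right (a := (1/2:ℝ)) (b := 1)
    (fun x : ℝ => x ^ 3) (1/2)
  norm_num at c1 c2
  rw [c1, c2]
  norm_num

lemma map_affine (a b : ℝ) (ha : a ≠ 0) :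
    Measure.map (fun u : ℝ => a * u + b) volume = ENNReal.ofReal |a⁻¹| • volume := by
  have : (fun u : ℝ => a * u + b) = (fun x : ℝ => x + b) ∘ (fun u : ℝ => a * u) := rfl
  rw [this, ← Measure.map_map (measurable_add_const b) (measurable_const_mul a),
    Real.map_volume_mul_left ha, Measure.map_smul, map_add_right_eq_self]

noncomputable def gp : ℝ → ℝ := fun u => (1/2) * u + 1/2
noncomputable def gm : ℝ → ℝ := fun u => (-(1/2)) * u + 1/2

lemma gp_meas : Measurable gp := by unfold gp; fun_prop
lemma gm_meas : Measurable gm := by unfold gm; fun_prop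

lemma map_gp : Measure.map gp unif01 = (2 : ℝ≥0∞) • volume.restrict (Icc (1/2 : ℝ) 1) := by
  have hpre : gp ⁻¹' (Icc (1/2 : ℝ) 1) = Icc 0 1 := by
    ext u
    simp only [gp, mem_preimage, mem_Icc]
    constructor <;> intro h <;> constructor <;> linarith [h.1, h.2]
  rw [unif01, ← hpre, ← Measure.restrict_map gp_meas measurableSet_Icc]
  rw [show gp = fun u : ℝ => (1/2) * u + 1/2 from rfl, map_affine _ _ (by norm_num)]
  rw [Measure.restrict_smul]
  norm_num

lemma map_gm : Measure.map gm unif01 = (2 : ℝ≥0∞) • volume.restrict (Icc (0:ℝ) (1/2)) := by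
  have hpre : gm ⁻¹' (Icc (0:ℝ) (1/2)) = Icc 0 1 := by
    ext u
    simp only [gm, mem_preimage, mem_Icc]
    constructor <;> intro h <;> constructor <;> linarith [h.1, h.2]
  rw [unif01, ← hpre, ← Measure.restrict_map gm_meas measurableSet_Icc]
  rw [show gm = fun u : ℝ => (-(1/2)) * u + 1/2 from rfl, map_affine _ _ (by norm_num)]
  rw [Measure.restrict_smul]
  norm_num

lemma half_sum : (2 : ℝ≥0∞)⁻¹ • ((2 : ℝ≥0∞) • volume.restrict (Icc (1/2 : ℝ) 1))
    + (2 : ℝ≥0∞)⁻¹ • ((2 : ℝ≥0∞) • volume.restrict (Icc (0:ℝ) (1/2))) = unif01 := by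
  rw [smul_smul, smul_smul, ENNReal.inv_mul_cancel (by norm_num) (by norm_num), one_smul, one_smul]
  rw [show volume.restrict (Icc (1/2 : ℝ) 1) = volume.restrict (Ioc (1/2 : ℝ) 1) from
    (Measure.restrict_congr_set Ioc_ae_eq_Icc).symm]
  rw [unif01, add_comm, ← Measure.restrict_union (by
      rw [Set.disjoint_left]; intro x hx hx'; exact absurd hx'.1 (not_lt.mpr hx.2))
    measurableSet_Ioc]
  rw [Icc_union_Ioc_eq_Icc (by norm_num) (by norm_num)]

lemma restrict_sum : volume.restrict (Icc (1/2 : ℝ) 1) + volume.restrict (Icc (0:ℝ) (1/2))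
    = unif01 := by
  rw [show volume.restrict (Icc (1/2 : ℝ) 1) = volume.restrict (Ioc (1/2 : ℝ) 1) from
    (Measure.restrict_congr_set Ioc_ae_eq_Icc).symm]
  rw [unif01, add_comm, ← Measure.restrict_union (by
      rw [Set.disjoint_left]; intro x hx hx'; exact absurd hx'.1 (not_lt.mpr hx.2))
    measurableSet_Ioc]
  rw [Icc_union_Ioc_eq_Icc (by norm_num) (by norm_num)]

lemma comb_aux (a b : ℝ≥0∞) : (4:ℝ≥0∞)⁻¹ * (2*a + 2*a + (2*b + 2*b)) = a + b := by
  rw [show (2:ℝ≥0∞)*a + 2*a + (2*b + 2*b) = 4 * (a + b) from by ring,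
    ← mul_assoc, ENNReal.inv_mul_cancel (by norm_num) (by norm_num), one_mul]

noncomputable def f1 : ℝ → ℝ × ℝ × ℝ := fun u => (gp u, gp u, gp u)
noncomputable def f2 : ℝ → ℝ × ℝ × ℝ := fun u => (gp u, gm u, gm u)
noncomputable def f3 : ℝ → ℝ × ℝ × ℝ := fun u => (gm u, gp u, gm u)
noncomputable def f4 : ℝ → ℝ × ℝ × ℝ := fun u => (gm u, gm u, gp u)

lemma f1_meas : Measurable f1 := (gp_meas.prodMk (gp_meas.prodMk gp_meas))
lemma f2_meas : Measurable f2 := (gp_meas.prodMk (gm_meas.prodMk gm_meas))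
lemma f3_meas : Measurable f3 := (gm_meas.prodMk (gp_meas.prodMk gm_meas))
lemma f4_meas : Measurable f4 := (gm_meas.prodMk (gm_meas.prodMk gp_meas))

noncomputable def Pmax : Measure (ℝ × ℝ × ℝ) :=
  (4:ℝ≥0∞)⁻¹ • (Measure.map f1 unif01 + Measure.map f2 unif01
    + Measure.map f3 unif01 + Measure.map f4 unif01)

lemma Pmax_prob : IsProbabilityMeasure Pmax := by
  constructor
  rw [Pmax]
  simp only [Measure.smul_apply, Measure.add_apply, smul_eq_mul,
    Measure.map_apply f1_meas MeasurableSet.univ,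
    Measure.map_apply f2_meas MeasurableSet.univ,
    Measure.map_apply f3_meas MeasurableSet.univ,
    Measure.map_apply f4_meas MeasurableSet.univ, preimage_univ]
  rw [unif01, Measure.restrict_apply_univ, Real.volume_Icc]
  norm_num
  exact ENNReal.inv_mul_cancel (by norm_num) (by norm_num)

lemma Pmax_fst : Pmax.map (fun p => p.1) = unif01 := by
  rw [Pmax, Measure.map_smul, Measure.map_add _ _ measurable_fst,
    Measure.map_add _ _ measurable_fst, Measure.map_add _ _ measurable_fst,
    Measure.map_map measurable_fst f1_meas, Measure.map_map measurable_fst f2_meas,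
    Measure.map_map measurable_fst f3_meas, Measure.map_map measurable_fst f4_meas]
  have e1 : (fun p : ℝ × ℝ × ℝ => p.1) ∘ f1 = gp := rfl
  have e2 : (fun p : ℝ × ℝ × ℝ => p.1) ∘ f2 = gp := rfl
  have e3 : (fun p : ℝ × ℝ × ℝ => p.1) ∘ f3 = gm := rfl
  have e4 : (fun p : ℝ × ℝ × ℝ => p.1) ∘ f4 = gm := rfl
  rw [e1, e2, e3, e4, map_gp, map_gm, ← restrict_sum]
  ext s hs
  simp only [Measure.smul_apply, Measure.add_apply, smul_eq_mul]
  rw [show ∀ a b : ℝ≥0∞, 2*a + 2*a + 2*b + 2*b = 2*a + 2*a + (2*b + 2*b) from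
    fun a b => by ring, comb_aux]

lemma Pmax_snd : Pmax.map (fun p => p.2.1) = unif01 := by
  have hm : Measurable fun p : ℝ × ℝ × ℝ => p.2.1 := measurable_fst.comp measurable_snd
  rw [Pmax, Measure.map_smul, Measure.map_add _ _ hm, Measure.map_add _ _ hm,
    Measure.map_add _ _ hm, Measure.map_map hm f1_meas, Measure.map_map hm f2_meas,
    Measure.map_map hm f3_meas, Measure.map_map hm f4_meas]
  have e1 : (fun p : ℝ × ℝ × ℝ => p.2.1) ∘ f1 = gp := rfl
  have e2 : (fun p : ℝ × ℝ × ℝ => p.2.1) ∘ f2 = gm := rfl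
  have e3 : (fun p : ℝ × ℝ × ℝ => p.2.1) ∘ f3 = gp := rfl
  have e4 : (fun p : ℝ × ℝ × ℝ => p.2.1) ∘ f4 = gm := rfl
  rw [e1, e2, e3, e4, map_gp, map_gm, ← restrict_sum]
  ext s hs
  simp only [Measure.smul_apply, Measure.add_apply, smul_eq_mul]
  rw [show ∀ a b : ℝ≥0∞, 2*a + 2*b + 2*a + 2*b = 2*a + 2*a + (2*b + 2*b) from
    fun a b => by ring, comb_aux]

lemma Pmax_trd : Pmax.map (fun p => p.2.2) = unif01 := by
  have hm : Measurable fun p : ℝ × ℝ × ℝ => p.2.2 := measurable_snd.comp measurable_snd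
  rw [Pmax, Measure.map_smul, Measure.map_add _ _ hm, Measure.map_add _ _ hm,
    Measure.map_add _ _ hm, Measure.map_map hm f1_meas, Measure.map_map hm f2_meas,
    Measure.map_map hm f3_meas, Measure.map_map hm f4_meas]
  have e1 : (fun p : ℝ × ℝ × ℝ => p.2.2) ∘ f1 = gp := rfl
  have e2 : (fun p : ℝ × ℝ × ℝ => p.2.2) ∘ f2 = gm := rfl
  have e3 : (fun p : ℝ × ℝ × ℝ => p.2.2) ∘ f3 = gm := rfl
  have e4 : (fun p : ℝ × ℝ × ℝ => p.2.2) ∘ f4 = gp := rfl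
  rw [e1, e2, e3, e4, map_gp, map_gm, ← restrict_sum]
  ext s hs
  simp only [Measure.smul_apply, Measure.add_apply, smul_eq_mul]
  rw [show ∀ a b : ℝ≥0∞, 2*a + 2*b + 2*b + 2*a = 2*a + 2*a + (2*b + 2*b) from
    fun a b => by ring, comb_aux]

lemma cube8 : ∫ u, u ^ 3 / 8 ∂unif01 = 1/32 := by
  rw [unif01, integral_Icc_eq_integral_Ioc,
    ← intervalIntegral.integral_of_le (by norm_num : (0:ℝ) ≤ 1),
    intervalIntegral.integral_div, integral_pow]
  norm_num

lemma hcont : Continuous fun p : ℝ × ℝ × ℝ => (p.1 - 1/2) * (p.2.1 - 1/2) * (p.2.2 - 1/2) := by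
  fun_prop

lemma int_f1 : ∫ p, (p.1 - 1/2) * (p.2.1 - 1/2) * (p.2.2 - 1/2) ∂(Measure.map f1 unif01)
    = 1/32 := by
  rw [integral_map f1_meas.aemeasurable hcont.aestronglyMeasurable]
  simp only [f1, gp, gm]
  rw [show (fun u : ℝ => ((1:ℝ)/2 * u + 1/2 - 1/2) * ((1:ℝ)/2 * u + 1/2 - 1/2)
      * ((1:ℝ)/2 * u + 1/2 - 1/2)) = (fun u : ℝ => u ^ 3 / 8) from
    funext fun u => by ring]
  exact cube8

lemma int_f2 : ∫ p, (p.1 - 1/2) * (p.2.1 - 1/2) * (p.2.2 - 1/2) ∂(Measure.map f2 unif01)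
    = 1/32 := by
  rw [integral_map f2_meas.aemeasurable hcont.aestronglyMeasurable]
  simp only [f2, gp, gm]
  rw [show (fun u : ℝ => ((1:ℝ)/2 * u + 1/2 - 1/2) * (-(1/2) * u + 1/2 - 1/2)
      * (-(1/2) * u + 1/2 - 1/2)) = (fun u : ℝ => u ^ 3 / 8) from
    funext fun u => by ring]
  exact cube8

lemma int_f3 : ∫ p, (p.1 - 1/2) * (p.2.1 - 1/2) * (p.2.2 - 1/2) ∂(Measure.map f3 unif01)
    = 1/32 := by
  rw [integral_map f3_meas.aemeasurable hcont.aestronglyMeasurable]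
  simp only [f3, gp, gm]
  rw [show (fun u : ℝ => (-(1/2) * u + 1/2 - 1/2) * ((1:ℝ)/2 * u + 1/2 - 1/2)
      * (-(1/2) * u + 1/2 - 1/2)) = (fun u : ℝ => u ^ 3 / 8) from
    funext fun u => by ring]
  exact cube8

lemma int_f4 : ∫ p, (p.1 - 1/2) * (p.2.1 - 1/2) * (p.2.2 - 1/2) ∂(Measure.map f4 unif01)
    = 1/32 := by
  rw [integral_map f4_meas.aemeasurable hcont.aestronglyMeasurable]
  simp only [f4, gp, gm]
  rw [show (fun u : ℝ => (-(1/2) * u + 1/2 - 1/2) * (-(1/2) * u + 1/2 - 1/2)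
      * ((1:ℝ)/2 * u + 1/2 - 1/2)) = (fun u : ℝ => u ^ 3 / 8) from
    funext fun u => by ring]
  exact cube8

lemma intble_fi (f : ℝ → ℝ × ℝ × ℝ) (hf : Measurable f) (hfc : Continuous f) :
    Integrable (fun p : ℝ × ℝ × ℝ => (p.1 - 1/2) * (p.2.1 - 1/2) * (p.2.2 - 1/2))
      (Measure.map f unif01) := by
  rw [integrable_map_measure hcont.aestronglyMeasurable hf.aemeasurable]
  exact Continuous.integrableOn_Icc (by fun_prop)

lemma f1_cont : Continuous f1 := by unfold f1 gp; fun_prop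
lemma f2_cont : Continuous f2 := by unfold f2 gp gm; fun_prop
lemma f3_cont : Continuous f3 := by unfold f3 gp gm; fun_prop
lemma f4_cont : Continuous f4 := by unfold f4 gp gm; fun_prop

lemma Pmax_int : ∫ p, (p.1 - 1/2) * (p.2.1 - 1/2) * (p.2.2 - 1/2) ∂Pmax = 1/32 := by
  have i1 := intble_fi f1 f1_meas f1_cont
  have i2 := intble_fi f2 f2_meas f2_cont
  have i3 := intble_fi f3 f3_meas f3_cont
  have i4 := intble_fi f4 f4_meas f4_cont
  rw [Pmax, integral_smul_measure,
    integral_add_measure ((i1.add_measure i2).add_measure i3) i4,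
    integral_add_measure (i1.add_measure i2) i3,
    integral_add_measure i1 i2, int_f1, int_f2, int_f3, int_f4]
  simp [ENNReal.toReal_inv]
  norm_num

lemma integrable_unif01 {f : ℝ → ℝ} (hf : Continuous f) : Integrable f unif01 :=
  hf.integrableOn_Icc

/-- For `U, V, W` uniform on `[0,1]` with arbitrary dependence,
`E((U−1/2)(V−1/2)(W−1/2)) ≤ 1/32`, the bound is attained, and consequently the maximum
coskewness of three `Uniform[0,1]` variables (obtained by standardizing, i.e., multiplying
by `(2√3)³ = (√12)³`) is `3√3/4`. -/
theorem stmt_19 {Ω : Type*} [MeasurableSpace Ω] (μ : Measure Ω) [IsProbabilityMeasure μ]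
    (U V W : Ω → ℝ) (hU : Measurable U) (hV : Measurable V) (hW : Measurable W)
    (hdU : μ.map U = unif01) (hdV : μ.map V = unif01) (hdW : μ.map W = unif01) :
    (∫ ω, (U ω - 1/2) * (V ω - 1/2) * (W ω - 1/2) ∂μ ≤ 1/32) ∧
    (∃ P : Measure (ℝ × ℝ × ℝ), IsProbabilityMeasure P ∧
        P.map (fun p => p.1) = unif01 ∧ P.map (fun p => p.2.1) = unif01 ∧
        P.map (fun p => p.2.2) = unif01 ∧
        ∫ p, (p.1 - 1/2) * (p.2.1 - 1/2) * (p.2.2 - 1/2) ∂P = 1/32) ∧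
    ((2 * Real.sqrt 3) ^ 3 * ∫ ω, (U ω - 1/2) * (V ω - 1/2) * (W ω - 1/2) ∂μ
        ≤ 3 * Real.sqrt 3 / 4) := by
  have hg : Continuous fun x : ℝ => |x - 1/2| ^ 3 := by continuity
  have hIA : ∫ ω, |U ω - 1/2| ^ 3 ∂μ = 1/32 := by
    rw [← abs_cube_int, ← hdU, integral_map hU.aemeasurable hg.aestronglyMeasurable]
  have hIB : ∫ ω, |V ω - 1/2| ^ 3 ∂μ = 1/32 := by
    rw [← abs_cube_int, ← hdV, integral_map hV.aemeasurable hg.aestronglyMeasurable]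
  have hIC : ∫ ω, |W ω - 1/2| ^ 3 ∂μ = 1/32 := by
    rw [← abs_cube_int, ← hdW, integral_map hW.aemeasurable hg.aestronglyMeasurable]
  have hiA : Integrable (fun ω => |U ω - 1/2| ^ 3) μ := by
    have h0 : Integrable (fun x : ℝ => |x - 1/2| ^ 3) (μ.map U) := by
      rw [hdU]; exact integrable_unif01 hg
    have := (integrable_map_measure hg.aestronglyMeasurable hU.aemeasurable).mp h0
    simpa [Function.comp_def] using this
  have hiB : Integrable (fun ω => |V ω - 1/2| ^ 3) μ := by
    have h0 : Integrable (fun x : ℝ => |x - 1/2| ^ 3) (μ.map V) := by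
      rw [hdV]; exact integrable_unif01 hg
    have := (integrable_map_measure hg.aestronglyMeasurable hV.aemeasurable).mp h0
    simpa [Function.comp_def] using this
  have hiC : Integrable (fun ω => |W ω - 1/2| ^ 3) μ := by
    have h0 : Integrable (fun x : ℝ => |x - 1/2| ^ 3) (μ.map W) := by
      rw [hdW]; exact integrable_unif01 hg
    have := (integrable_map_measure hg.aestronglyMeasurable hW.aemeasurable).mp h0
    simpa [Function.comp_def] using this
  have hgint : Integrable
      (fun ω => (|U ω - 1/2| ^ 3 + |V ω - 1/2| ^ 3 + |W ω - 1/2| ^ 3) / 3) μ :=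
    ((hiA.add hiB).add hiC).div_const 3
  have hbound : ∀ ω, (U ω - 1/2) * (V ω - 1/2) * (W ω - 1/2)
      ≤ (|U ω - 1/2| ^ 3 + |V ω - 1/2| ^ 3 + |W ω - 1/2| ^ 3) / 3 := by
    intro ω
    calc (U ω - 1/2) * (V ω - 1/2) * (W ω - 1/2)
        ≤ |(U ω - 1/2) * (V ω - 1/2) * (W ω - 1/2)| := le_abs_self _
      _ = |U ω - 1/2| * |V ω - 1/2| * |W ω - 1/2| := by rw [abs_mul, abs_mul]
      _ ≤ (|U ω - 1/2| ^ 3 + |V ω - 1/2| ^ 3 + |W ω - 1/2| ^ 3) / 3 :=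
          amgm3 _ _ _ (abs_nonneg _) (abs_nonneg _) (abs_nonneg _)
  have habs : ∀ ω, |(U ω - 1/2) * (V ω - 1/2) * (W ω - 1/2)|
      ≤ (|U ω - 1/2| ^ 3 + |V ω - 1/2| ^ 3 + |W ω - 1/2| ^ 3) / 3 := by
    intro ω
    calc |(U ω - 1/2) * (V ω - 1/2) * (W ω - 1/2)|
        = |U ω - 1/2| * |V ω - 1/2| * |W ω - 1/2| := by rw [abs_mul, abs_mul]
      _ ≤ (|U ω - 1/2| ^ 3 + |V ω - 1/2| ^ 3 + |W ω - 1/2| ^ 3) / 3 :=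
          amgm3 _ _ _ (abs_nonneg _) (abs_nonneg _) (abs_nonneg _)
  have hprod_meas : AEStronglyMeasurable
      (fun ω => (U ω - 1/2) * (V ω - 1/2) * (W ω - 1/2)) μ :=
    (((hU.sub measurable_const).mul (hV.sub measurable_const)).mul
      (hW.sub measurable_const)).aestronglyMeasurable
  have hprod_int : Integrable (fun ω => (U ω - 1/2) * (V ω - 1/2) * (W ω - 1/2)) μ := by
    refine hgint.mono hprod_meas (ae_of_all _ fun ω => ?_)
    rw [Real.norm_eq_abs, Real.norm_eq_abs]
    exact (habs ω).trans (le_abs_self _)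
  have h1 : ∫ ω, (U ω - 1/2) * (V ω - 1/2) * (W ω - 1/2) ∂μ ≤ 1/32 := by
    calc ∫ ω, (U ω - 1/2) * (V ω - 1/2) * (W ω - 1/2) ∂μ
        ≤ ∫ ω, (|U ω - 1/2| ^ 3 + |V ω - 1/2| ^ 3 + |W ω - 1/2| ^ 3) / 3 ∂μ :=
          integral_mono hprod_int hgint hbound
      _ = 1/32 := by
          have hiAB : Integrable (fun ω => |U ω - 1/2| ^ 3 + |V ω - 1/2| ^ 3) μ :=
            hiA.add hiB
          rw [integral_div, integral_add hiAB hiC, integral_add hiA hiB, hIA, hIB, hIC]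
          norm_num
  refine ⟨h1, ⟨Pmax, Pmax_prob, Pmax_fst, Pmax_snd, Pmax_trd, Pmax_int⟩, ?_⟩
  have heq : (2 * Real.sqrt 3) ^ 3 * (1/32) = 3 * Real.sqrt 3 / 4 := by
    rw [show (2 * Real.sqrt 3) ^ 3 = 8 * (Real.sqrt 3 ^ 2 * Real.sqrt 3) from by ring,
      Real.sq_sqrt (by norm_num : (0:ℝ) ≤ 3)]
    ring
  calc (2 * Real.sqrt 3) ^ 3 * ∫ ω, (U ω - 1/2) * (V ω - 1/2) * (W ω - 1/2) ∂μ
      ≤ (2 * Real.sqrt 3) ^ 3 * (1/32) :=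
        mul_le_mul_of_nonneg_left h1 (by positivity)
    _ = 3 * Real.sqrt 3 / 4 := heq
end
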